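/- Let ρ₁ and ρ₂ be isometries of the lattice D₄ satisfying ρ₁ ∘ ρ₁ = -id and ρ₂ ∘ ρ₂ = -id. Then there exists an isometry g of D₄ with g ∘ ρ₁ = ρ₂ ∘ g. In particular, D₄ has a unique structure of ℤ[i]-module up to isometries. -/

import Mathlib

open Matrix

/-- The lattice `D₄ = {x ∈ ℤ⁴ : x₁ + x₂ + x₃ + x₄ is even}` as a `ℤ`-submodule of `ℤ⁴`. -/
def D4 : Submodule ℤ (Fin 4 → ℤ) where
  carrier := {x | (2 : ℤ) ∣ (x 0 + x 1 + x 2 + x 3)}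
  add_mem' {a b} ha hb := by
    simp only [Set.mem_setOf_eq, Pi.add_apply] at *
    omega
  zero_mem' := by
    simp only [Set.mem_setOf_eq, Pi.zero_apply, add_zero]
    exact dvd_zero 2
  smul_mem' c x hx := by
    simp only [Set.mem_setOf_eq, Pi.smul_apply, smul_eq_mul] at *
    obtain ⟨k, hk⟩ := hx
    exact ⟨c * k, by linear_combination c * hk⟩

theorem mem_D4_iff (x : Fin 4 → ℤ) : x ∈ D4 ↔ (2 : ℤ) ∣ (x 0 + x 1 + x 2 + x 3) :=
  Iff.rfl

/-- An isometry of the lattice `D₄`: a `ℤ`-linear automorphism of `D₄` preserving the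
restriction of the standard Euclidean inner product of `ℤ⁴`. -/
def IsD4Isometry (g : D4 ≃ₗ[ℤ] D4) : Prop :=
  ∀ x y : D4, ((g x : Fin 4 → ℤ) ⬝ᵥ (g y : Fin 4 → ℤ)) = ((x : Fin 4 → ℤ) ⬝ᵥ (y : Fin 4 → ℤ))

abbrev T4 := ℤ × ℤ × ℤ × ℤ
abbrev Cfg := T4 × T4 × T4 × T4

instance iT4eq : DecidableEq T4 := inferInstance
instance iCfgeq : DecidableEq Cfg := inferInstance
instance iEnteq : DecidableEq (Cfg × Cfg × Cfg × Cfg) := inferInstance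

def nth (V : Cfg) : Fin 4 → T4 := ![V.1, V.2.1, V.2.2.1, V.2.2.2]

def dotT (x y : T4) : ℤ :=
  x.1 * y.1 + x.2.1 * y.2.1 + x.2.2.1 * y.2.2.1 + x.2.2.2 * y.2.2.2

def sumT (x : T4) : ℤ := x.1 + x.2.1 + x.2.2.1 + x.2.2.2

def cfT (x : T4) : T4 := (x.1, x.1 + x.2.1, sumT x / 2 - x.2.2.2, sumT x / 2)

def smT (c : ℤ) (x : T4) : T4 := (c * x.1, c * x.2.1, c * x.2.2.1, c * x.2.2.2)

def addT (x y : T4) : T4 := (x.1 + y.1, x.2.1 + y.2.1, x.2.2.1 + y.2.2.1, x.2.2.2 + y.2.2.2)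

def negT (x : T4) : T4 := (-x.1, -x.2.1, -x.2.2.1, -x.2.2.2)

def linT (c : T4) (V : Cfg) : T4 :=
  addT (smT c.1 V.1) (addT (smT c.2.1 V.2.1) (addT (smT c.2.2.1 V.2.2.1) (smT c.2.2.2 V.2.2.2)))

def bT : Cfg := ((1,-1,0,0),(0,1,-1,0),(0,0,1,-1),(0,0,1,1))

abbrev rho2T (V : Cfg) : Prop := ∀ i : Fin 4, linT (cfT (nth V i)) V = negT (nth bT i)

def rootsL : List T4 := [(-1, -1, 0, 0), (-1, 0, -1, 0), (-1, 0, 0, -1), (-1, 0, 0, 1), (-1, 0, 1, 0), (-1, 1, 0, 0), (0, -1, -1, 0), (0, -1, 0, -1), (0, -1, 0, 1), (0, -1, 1, 0), (0, 0, -1, -1), (0, 0, -1, 1), (0, 0, 1, -1), (0, 0, 1, 1), (0, 1, -1, 0), (0, 1, 0, -1), (0, 1, 0, 1), (0, 1, 1, 0), (1, -1, 0, 0), (1, 0, -1, 0), (1, 0, 0, -1), (1, 0, 0, 1), (1, 0, 1, 0), (1, 1, 0, 0)]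

def SL : List Cfg := [
  ((-1, -1, 0, 0), (1, 0, 0, -1), (0, 0, 1, 1), (0, 0, -1, 1)),
  ((-1, -1, 0, 0), (1, 0, 0, 1), (0, 0, -1, -1), (0, 0, 1, -1)),
  ((0, 0, -1, -1), (-1, 0, 0, 1), (1, 1, 0, 0), (1, -1, 0, 0)),
  ((0, 0, -1, -1), (0, 1, 1, 0), (-1, -1, 0, 0), (1, -1, 0, 0)),
  ((0, 0, -1, 1), (-1, 0, 0, -1), (1, -1, 0, 0), (1, 1, 0, 0)),
  ((0, 0, -1, 1), (0, 1, 1, 0), (1, -1, 0, 0), (-1, -1, 0, 0)),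
  ((0, 0, 1, -1), (0, -1, -1, 0), (-1, 1, 0, 0), (1, 1, 0, 0)),
  ((0, 0, 1, -1), (1, 0, 0, 1), (-1, 1, 0, 0), (-1, -1, 0, 0)),
  ((0, 0, 1, 1), (0, -1, -1, 0), (1, 1, 0, 0), (-1, 1, 0, 0)),
  ((0, 0, 1, 1), (1, 0, 0, -1), (-1, -1, 0, 0), (-1, 1, 0, 0)),
  ((1, 1, 0, 0), (-1, 0, 0, -1), (0, 0, 1, 1), (0, 0, -1, 1)),
  ((1, 1, 0, 0), (-1, 0, 0, 1), (0, 0, -1, -1), (0, 0, 1, -1))]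

def pt0 : List (Cfg × Cfg × Cfg × Cfg) := [
  (((-1, -1, 0, 0), (1, 0, 0, -1), (0, 0, 1, 1), (0, 0, -1, 1)), ((-1, -1, 0, 0), (1, 0, 0, -1), (0, 0, 1, 1), (0, 0, -1, 1)), ((-1, -1, 0, 0), (1, 0, -1, 0), (0, 0, 1, -1), (0, 0, 1, 1)), ((1, 1, 0, 0), (-1, 0, -1, 0), (0, 0, 1, -1), (0, 0, 1, 1))),
  (((-1, -1, 0, 0), (1, 0, 0, -1), (0, 0, 1, 1), (0, 0, -1, 1)), ((-1, -1, 0, 0), (1, 0, 0, 1), (0, 0, -1, -1), (0, 0, 1, -1)), ((-1, -1, 0, 0), (1, 0, -1, 0), (0, 0, 1, 1), (0, 0, 1, -1)), ((1, 1, 0, 0), (-1, 0, -1, 0), (0, 0, 1, 1), (0, 0, 1, -1))),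
  (((-1, -1, 0, 0), (1, 0, 0, -1), (0, 0, 1, 1), (0, 0, -1, 1)), ((0, 0, -1, -1), (-1, 0, 0, 1), (1, 1, 0, 0), (1, -1, 0, 0)), ((-1, -1, 0, 0), (0, 1, -1, 0), (0, 0, 1, 1), (1, -1, 0, 0)), ((0, 0, 1, 1), (0, 1, -1, 0), (-1, -1, 0, 0), (0, 0, 1, -1))),
  (((-1, -1, 0, 0), (1, 0, 0, -1), (0, 0, 1, 1), (0, 0, -1, 1)), ((0, 0, -1, -1), (0, 1, 1, 0), (-1, -1, 0, 0), (1, -1, 0, 0)), ((-1, -1, 0, 0), (0, 1, 0, -1), (0, 0, 1, 1), (1, -1, 0, 0)), ((0, 0, 1, 1), (-1, 0, -1, 0), (1, 1, 0, 0), (0, 0, 1, -1))),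
  (((-1, -1, 0, 0), (1, 0, 0, -1), (0, 0, 1, 1), (0, 0, -1, 1)), ((0, 0, -1, 1), (-1, 0, 0, -1), (1, -1, 0, 0), (1, 1, 0, 0)), ((-1, -1, 0, 0), (0, 1, -1, 0), (0, 0, 1, -1), (1, -1, 0, 0)), ((0, 0, 1, 1), (0, 1, -1, 0), (0, 0, 1, -1), (-1, -1, 0, 0))),
  (((-1, -1, 0, 0), (1, 0, 0, -1), (0, 0, 1, 1), (0, 0, -1, 1)), ((0, 0, -1, 1), (0, 1, 1, 0), (1, -1, 0, 0), (-1, -1, 0, 0)), ((-1, -1, 0, 0), (0, 1, 0, 1), (0, 0, 1, -1), (1, -1, 0, 0)), ((0, 0, 1, 1), (-1, 0, -1, 0), (0, 0, 1, -1), (1, 1, 0, 0))),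
  (((-1, -1, 0, 0), (1, 0, 0, -1), (0, 0, 1, 1), (0, 0, -1, 1)), ((0, 0, 1, -1), (0, -1, -1, 0), (-1, 1, 0, 0), (1, 1, 0, 0)), ((-1, -1, 0, 0), (0, 1, -1, 0), (1, -1, 0, 0), (0, 0, 1, -1)), ((0, 0, 1, -1), (0, 1, -1, 0), (0, 0, 1, 1), (-1, -1, 0, 0))),
  (((-1, -1, 0, 0), (1, 0, 0, -1), (0, 0, 1, 1), (0, 0, -1, 1)), ((0, 0, 1, -1), (1, 0, 0, 1), (-1, 1, 0, 0), (-1, -1, 0, 0)), ((-1, -1, 0, 0), (0, 1, 0, 1), (1, -1, 0, 0), (0, 0, 1, -1)), ((0, 0, 1, -1), (-1, 0, -1, 0), (0, 0, 1, 1), (1, 1, 0, 0))),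
  (((-1, -1, 0, 0), (1, 0, 0, -1), (0, 0, 1, 1), (0, 0, -1, 1)), ((0, 0, 1, 1), (0, -1, -1, 0), (1, 1, 0, 0), (-1, 1, 0, 0)), ((-1, -1, 0, 0), (0, 1, -1, 0), (1, -1, 0, 0), (0, 0, 1, 1)), ((0, 0, 1, -1), (0, 1, -1, 0), (-1, -1, 0, 0), (0, 0, 1, 1))),
  (((-1, -1, 0, 0), (1, 0, 0, -1), (0, 0, 1, 1), (0, 0, -1, 1)), ((0, 0, 1, 1), (1, 0, 0, -1), (-1, -1, 0, 0), (-1, 1, 0, 0)), ((-1, -1, 0, 0), (0, 1, 0, -1), (1, -1, 0, 0), (0, 0, 1, 1)), ((0, 0, 1, -1), (-1, 0, -1, 0), (1, 1, 0, 0), (0, 0, 1, 1))),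
  (((-1, -1, 0, 0), (1, 0, 0, -1), (0, 0, 1, 1), (0, 0, -1, 1)), ((1, 1, 0, 0), (-1, 0, 0, -1), (0, 0, 1, 1), (0, 0, -1, 1)), ((-1, -1, 0, 0), (0, 1, -1, 0), (0, 0, 1, -1), (0, 0, 1, 1)), ((-1, -1, 0, 0), (0, 1, -1, 0), (0, 0, 1, -1), (0, 0, 1, 1))),
  (((-1, -1, 0, 0), (1, 0, 0, -1), (0, 0, 1, 1), (0, 0, -1, 1)), ((1, 1, 0, 0), (-1, 0, 0, 1), (0, 0, -1, -1), (0, 0, 1, -1)), ((-1, -1, 0, 0), (0, 1, -1, 0), (0, 0, 1, 1), (0, 0, 1, -1)), ((-1, -1, 0, 0), (0, 1, -1, 0), (0, 0, 1, 1), (0, 0, 1, -1)))]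

def pt1 : List (Cfg × Cfg × Cfg × Cfg) := [
  (((-1, -1, 0, 0), (1, 0, 0, 1), (0, 0, -1, -1), (0, 0, 1, -1)), ((-1, -1, 0, 0), (1, 0, 0, -1), (0, 0, 1, 1), (0, 0, -1, 1)), ((-1, -1, 0, 0), (1, 0, -1, 0), (0, 0, 1, 1), (0, 0, 1, -1)), ((1, 1, 0, 0), (-1, 0, -1, 0), (0, 0, 1, 1), (0, 0, 1, -1))),
  (((-1, -1, 0, 0), (1, 0, 0, 1), (0, 0, -1, -1), (0, 0, 1, -1)), ((-1, -1, 0, 0), (1, 0, 0, 1), (0, 0, -1, -1), (0, 0, 1, -1)), ((-1, -1, 0, 0), (1, 0, -1, 0), (0, 0, 1, -1), (0, 0, 1, 1)), ((1, 1, 0, 0), (-1, 0, -1, 0), (0, 0, 1, -1), (0, 0, 1, 1))),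
  (((-1, -1, 0, 0), (1, 0, 0, 1), (0, 0, -1, -1), (0, 0, 1, -1)), ((0, 0, -1, -1), (-1, 0, 0, 1), (1, 1, 0, 0), (1, -1, 0, 0)), ((-1, -1, 0, 0), (0, 1, -1, 0), (1, -1, 0, 0), (0, 0, 1, 1)), ((0, 0, 1, -1), (0, 1, -1, 0), (-1, -1, 0, 0), (0, 0, 1, 1))),
  (((-1, -1, 0, 0), (1, 0, 0, 1), (0, 0, -1, -1), (0, 0, 1, -1)), ((0, 0, -1, -1), (0, 1, 1, 0), (-1, -1, 0, 0), (1, -1, 0, 0)), ((-1, -1, 0, 0), (0, 1, 0, -1), (1, -1, 0, 0), (0, 0, 1, 1)), ((0, 0, 1, -1), (-1, 0, -1, 0), (1, 1, 0, 0), (0, 0, 1, 1))),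
  (((-1, -1, 0, 0), (1, 0, 0, 1), (0, 0, -1, -1), (0, 0, 1, -1)), ((0, 0, -1, 1), (-1, 0, 0, -1), (1, -1, 0, 0), (1, 1, 0, 0)), ((-1, -1, 0, 0), (0, 1, -1, 0), (1, -1, 0, 0), (0, 0, 1, -1)), ((0, 0, 1, -1), (0, 1, -1, 0), (0, 0, 1, 1), (-1, -1, 0, 0))),
  (((-1, -1, 0, 0), (1, 0, 0, 1), (0, 0, -1, -1), (0, 0, 1, -1)), ((0, 0, -1, 1), (0, 1, 1, 0), (1, -1, 0, 0), (-1, -1, 0, 0)), ((-1, -1, 0, 0), (0, 1, 0, 1), (1, -1, 0, 0), (0, 0, 1, -1)), ((0, 0, 1, -1), (-1, 0, -1, 0), (0, 0, 1, 1), (1, 1, 0, 0))),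
  (((-1, -1, 0, 0), (1, 0, 0, 1), (0, 0, -1, -1), (0, 0, 1, -1)), ((0, 0, 1, -1), (0, -1, -1, 0), (-1, 1, 0, 0), (1, 1, 0, 0)), ((-1, -1, 0, 0), (0, 1, -1, 0), (0, 0, 1, -1), (1, -1, 0, 0)), ((0, 0, 1, 1), (0, 1, -1, 0), (0, 0, 1, -1), (-1, -1, 0, 0))),
  (((-1, -1, 0, 0), (1, 0, 0, 1), (0, 0, -1, -1), (0, 0, 1, -1)), ((0, 0, 1, -1), (1, 0, 0, 1), (-1, 1, 0, 0), (-1, -1, 0, 0)), ((-1, -1, 0, 0), (0, 1, 0, 1), (0, 0, 1, -1), (1, -1, 0, 0)), ((0, 0, 1, 1), (-1, 0, -1, 0), (0, 0, 1, -1), (1, 1, 0, 0))),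
  (((-1, -1, 0, 0), (1, 0, 0, 1), (0, 0, -1, -1), (0, 0, 1, -1)), ((0, 0, 1, 1), (0, -1, -1, 0), (1, 1, 0, 0), (-1, 1, 0, 0)), ((-1, -1, 0, 0), (0, 1, -1, 0), (0, 0, 1, 1), (1, -1, 0, 0)), ((0, 0, 1, 1), (0, 1, -1, 0), (-1, -1, 0, 0), (0, 0, 1, -1))),
  (((-1, -1, 0, 0), (1, 0, 0, 1), (0, 0, -1, -1), (0, 0, 1, -1)), ((0, 0, 1, 1), (1, 0, 0, -1), (-1, -1, 0, 0), (-1, 1, 0, 0)), ((-1, -1, 0, 0), (0, 1, 0, -1), (0, 0, 1, 1), (1, -1, 0, 0)), ((0, 0, 1, 1), (-1, 0, -1, 0), (1, 1, 0, 0), (0, 0, 1, -1))),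
  (((-1, -1, 0, 0), (1, 0, 0, 1), (0, 0, -1, -1), (0, 0, 1, -1)), ((1, 1, 0, 0), (-1, 0, 0, -1), (0, 0, 1, 1), (0, 0, -1, 1)), ((-1, -1, 0, 0), (0, 1, -1, 0), (0, 0, 1, 1), (0, 0, 1, -1)), ((-1, -1, 0, 0), (0, 1, -1, 0), (0, 0, 1, 1), (0, 0, 1, -1))),
  (((-1, -1, 0, 0), (1, 0, 0, 1), (0, 0, -1, -1), (0, 0, 1, -1)), ((1, 1, 0, 0), (-1, 0, 0, 1), (0, 0, -1, -1), (0, 0, 1, -1)), ((-1, -1, 0, 0), (0, 1, -1, 0), (0, 0, 1, -1), (0, 0, 1, 1)), ((-1, -1, 0, 0), (0, 1, -1, 0), (0, 0, 1, -1), (0, 0, 1, 1)))]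

def pt2 : List (Cfg × Cfg × Cfg × Cfg) := [
  (((0, 0, -1, -1), (-1, 0, 0, 1), (1, 1, 0, 0), (1, -1, 0, 0)), ((-1, -1, 0, 0), (1, 0, 0, -1), (0, 0, 1, 1), (0, 0, -1, 1)), ((-1, -1, 0, 0), (0, 1, -1, 0), (0, 0, 1, 1), (1, -1, 0, 0)), ((0, 0, 1, 1), (0, 1, -1, 0), (-1, -1, 0, 0), (0, 0, 1, -1))),
  (((0, 0, -1, -1), (-1, 0, 0, 1), (1, 1, 0, 0), (1, -1, 0, 0)), ((-1, -1, 0, 0), (1, 0, 0, 1), (0, 0, -1, -1), (0, 0, 1, -1)), ((-1, -1, 0, 0), (0, 1, -1, 0), (0, 0, 1, -1), (1, -1, 0, 0)), ((0, 0, 1, 1), (0, 1, -1, 0), (0, 0, 1, -1), (-1, -1, 0, 0))),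
  (((0, 0, -1, -1), (-1, 0, 0, 1), (1, 1, 0, 0), (1, -1, 0, 0)), ((0, 0, -1, -1), (-1, 0, 0, 1), (1, 1, 0, 0), (1, -1, 0, 0)), ((-1, -1, 0, 0), (0, 1, 0, -1), (1, -1, 0, 0), (0, 0, -1, 1)), ((0, 0, 1, -1), (0, 1, 0, 1), (0, 0, -1, -1), (-1, -1, 0, 0))),
  (((0, 0, -1, -1), (-1, 0, 0, 1), (1, 1, 0, 0), (1, -1, 0, 0)), ((0, 0, -1, -1), (0, 1, 1, 0), (-1, -1, 0, 0), (1, -1, 0, 0)), ((-1, -1, 0, 0), (0, 1, -1, 0), (1, -1, 0, 0), (0, 0, 1, -1)), ((0, 0, 1, -1), (0, 1, -1, 0), (0, 0, 1, 1), (-1, -1, 0, 0))),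
  (((0, 0, -1, -1), (-1, 0, 0, 1), (1, 1, 0, 0), (1, -1, 0, 0)), ((0, 0, -1, 1), (-1, 0, 0, -1), (1, -1, 0, 0), (1, 1, 0, 0)), ((-1, -1, 0, 0), (0, 1, 0, 1), (1, -1, 0, 0), (0, 0, -1, -1)), ((0, 0, 1, -1), (0, 1, 0, 1), (-1, -1, 0, 0), (0, 0, -1, -1))),
  (((0, 0, -1, -1), (-1, 0, 0, 1), (1, 1, 0, 0), (1, -1, 0, 0)), ((0, 0, -1, 1), (0, 1, 1, 0), (1, -1, 0, 0), (-1, -1, 0, 0)), ((-1, -1, 0, 0), (0, 1, -1, 0), (1, -1, 0, 0), (0, 0, 1, 1)), ((0, 0, 1, -1), (0, 1, -1, 0), (-1, -1, 0, 0), (0, 0, 1, 1))),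
  (((0, 0, -1, -1), (-1, 0, 0, 1), (1, 1, 0, 0), (1, -1, 0, 0)), ((0, 0, 1, -1), (0, -1, -1, 0), (-1, 1, 0, 0), (1, 1, 0, 0)), ((-1, -1, 0, 0), (0, 1, 0, 1), (0, 0, 1, -1), (0, 0, -1, -1)), ((-1, -1, 0, 0), (0, 1, 0, 1), (0, 0, 1, -1), (0, 0, -1, -1))),
  (((0, 0, -1, -1), (-1, 0, 0, 1), (1, 1, 0, 0), (1, -1, 0, 0)), ((0, 0, 1, -1), (1, 0, 0, 1), (-1, 1, 0, 0), (-1, -1, 0, 0)), ((-1, -1, 0, 0), (0, 1, -1, 0), (0, 0, 1, -1), (0, 0, 1, 1)), ((-1, -1, 0, 0), (0, 1, -1, 0), (0, 0, 1, -1), (0, 0, 1, 1))),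
  (((0, 0, -1, -1), (-1, 0, 0, 1), (1, 1, 0, 0), (1, -1, 0, 0)), ((0, 0, 1, 1), (0, -1, -1, 0), (1, 1, 0, 0), (-1, 1, 0, 0)), ((-1, -1, 0, 0), (0, 1, 0, -1), (0, 0, 1, 1), (0, 0, -1, 1)), ((-1, -1, 0, 0), (0, 1, 0, 1), (0, 0, -1, -1), (0, 0, 1, -1))),
  (((0, 0, -1, -1), (-1, 0, 0, 1), (1, 1, 0, 0), (1, -1, 0, 0)), ((0, 0, 1, 1), (1, 0, 0, -1), (-1, -1, 0, 0), (-1, 1, 0, 0)), ((-1, -1, 0, 0), (0, 1, -1, 0), (0, 0, 1, 1), (0, 0, 1, -1)), ((-1, -1, 0, 0), (0, 1, -1, 0), (0, 0, 1, 1), (0, 0, 1, -1))),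
  (((0, 0, -1, -1), (-1, 0, 0, 1), (1, 1, 0, 0), (1, -1, 0, 0)), ((1, 1, 0, 0), (-1, 0, 0, -1), (0, 0, 1, 1), (0, 0, -1, 1)), ((-1, -1, 0, 0), (1, 0, -1, 0), (0, 0, 1, 1), (-1, 1, 0, 0)), ((0, 0, -1, -1), (0, 1, 0, 1), (-1, -1, 0, 0), (0, 0, 1, -1))),
  (((0, 0, -1, -1), (-1, 0, 0, 1), (1, 1, 0, 0), (1, -1, 0, 0)), ((1, 1, 0, 0), (-1, 0, 0, 1), (0, 0, -1, -1), (0, 0, 1, -1)), ((-1, -1, 0, 0), (1, 0, -1, 0), (0, 0, 1, -1), (-1, 1, 0, 0)), ((0, 0, -1, -1), (0, 1, 0, 1), (0, 0, 1, -1), (-1, -1, 0, 0)))]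

def pt3 : List (Cfg × Cfg × Cfg × Cfg) := [
  (((0, 0, -1, -1), (0, 1, 1, 0), (-1, -1, 0, 0), (1, -1, 0, 0)), ((-1, -1, 0, 0), (1, 0, 0, -1), (0, 0, 1, 1), (0, 0, -1, 1)), ((-1, -1, 0, 0), (0, 1, -1, 0), (0, 0, 1, -1), (1, -1, 0, 0)), ((0, 0, 1, 1), (0, 1, -1, 0), (0, 0, 1, -1), (-1, -1, 0, 0))),
  (((0, 0, -1, -1), (0, 1, 1, 0), (-1, -1, 0, 0), (1, -1, 0, 0)), ((-1, -1, 0, 0), (1, 0, 0, 1), (0, 0, -1, -1), (0, 0, 1, -1)), ((-1, -1, 0, 0), (0, 1, -1, 0), (0, 0, 1, 1), (1, -1, 0, 0)), ((0, 0, 1, 1), (0, 1, -1, 0), (-1, -1, 0, 0), (0, 0, 1, -1))),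
  (((0, 0, -1, -1), (0, 1, 1, 0), (-1, -1, 0, 0), (1, -1, 0, 0)), ((0, 0, -1, -1), (-1, 0, 0, 1), (1, 1, 0, 0), (1, -1, 0, 0)), ((-1, -1, 0, 0), (0, 1, 0, -1), (0, 0, 1, 1), (0, 0, -1, 1)), ((-1, -1, 0, 0), (0, 1, 0, 1), (0, 0, -1, -1), (0, 0, 1, -1))),
  (((0, 0, -1, -1), (0, 1, 1, 0), (-1, -1, 0, 0), (1, -1, 0, 0)), ((0, 0, -1, -1), (0, 1, 1, 0), (-1, -1, 0, 0), (1, -1, 0, 0)), ((-1, -1, 0, 0), (0, 1, -1, 0), (0, 0, 1, 1), (0, 0, 1, -1)), ((-1, -1, 0, 0), (0, 1, -1, 0), (0, 0, 1, 1), (0, 0, 1, -1))),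
  (((0, 0, -1, -1), (0, 1, 1, 0), (-1, -1, 0, 0), (1, -1, 0, 0)), ((0, 0, -1, 1), (-1, 0, 0, -1), (1, -1, 0, 0), (1, 1, 0, 0)), ((-1, -1, 0, 0), (0, 1, 0, 1), (0, 0, 1, -1), (0, 0, -1, -1)), ((-1, -1, 0, 0), (0, 1, 0, 1), (0, 0, 1, -1), (0, 0, -1, -1))),
  (((0, 0, -1, -1), (0, 1, 1, 0), (-1, -1, 0, 0), (1, -1, 0, 0)), ((0, 0, -1, 1), (0, 1, 1, 0), (1, -1, 0, 0), (-1, -1, 0, 0)), ((-1, -1, 0, 0), (0, 1, -1, 0), (0, 0, 1, -1), (0, 0, 1, 1)), ((-1, -1, 0, 0), (0, 1, -1, 0), (0, 0, 1, -1), (0, 0, 1, 1))),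
  (((0, 0, -1, -1), (0, 1, 1, 0), (-1, -1, 0, 0), (1, -1, 0, 0)), ((0, 0, 1, -1), (0, -1, -1, 0), (-1, 1, 0, 0), (1, 1, 0, 0)), ((-1, -1, 0, 0), (0, 1, 0, 1), (1, -1, 0, 0), (0, 0, -1, -1)), ((0, 0, 1, -1), (0, 1, 0, 1), (-1, -1, 0, 0), (0, 0, -1, -1))),
  (((0, 0, -1, -1), (0, 1, 1, 0), (-1, -1, 0, 0), (1, -1, 0, 0)), ((0, 0, 1, -1), (1, 0, 0, 1), (-1, 1, 0, 0), (-1, -1, 0, 0)), ((-1, -1, 0, 0), (0, 1, -1, 0), (1, -1, 0, 0), (0, 0, 1, 1)), ((0, 0, 1, -1), (0, 1, -1, 0), (-1, -1, 0, 0), (0, 0, 1, 1))),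
  (((0, 0, -1, -1), (0, 1, 1, 0), (-1, -1, 0, 0), (1, -1, 0, 0)), ((0, 0, 1, 1), (0, -1, -1, 0), (1, 1, 0, 0), (-1, 1, 0, 0)), ((-1, -1, 0, 0), (0, 1, 0, -1), (1, -1, 0, 0), (0, 0, -1, 1)), ((0, 0, 1, -1), (0, 1, 0, 1), (0, 0, -1, -1), (-1, -1, 0, 0))),
  (((0, 0, -1, -1), (0, 1, 1, 0), (-1, -1, 0, 0), (1, -1, 0, 0)), ((0, 0, 1, 1), (1, 0, 0, -1), (-1, -1, 0, 0), (-1, 1, 0, 0)), ((-1, -1, 0, 0), (0, 1, -1, 0), (1, -1, 0, 0), (0, 0, 1, -1)), ((0, 0, 1, -1), (0, 1, -1, 0), (0, 0, 1, 1), (-1, -1, 0, 0))),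
  (((0, 0, -1, -1), (0, 1, 1, 0), (-1, -1, 0, 0), (1, -1, 0, 0)), ((1, 1, 0, 0), (-1, 0, 0, -1), (0, 0, 1, 1), (0, 0, -1, 1)), ((-1, -1, 0, 0), (1, 0, -1, 0), (0, 0, 1, -1), (-1, 1, 0, 0)), ((0, 0, -1, -1), (0, 1, 0, 1), (0, 0, 1, -1), (-1, -1, 0, 0))),
  (((0, 0, -1, -1), (0, 1, 1, 0), (-1, -1, 0, 0), (1, -1, 0, 0)), ((1, 1, 0, 0), (-1, 0, 0, 1), (0, 0, -1, -1), (0, 0, 1, -1)), ((-1, -1, 0, 0), (1, 0, -1, 0), (0, 0, 1, 1), (-1, 1, 0, 0)), ((0, 0, -1, -1), (0, 1, 0, 1), (-1, -1, 0, 0), (0, 0, 1, -1)))]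

def pt4 : List (Cfg × Cfg × Cfg × Cfg) := [
  (((0, 0, -1, 1), (-1, 0, 0, -1), (1, -1, 0, 0), (1, 1, 0, 0)), ((-1, -1, 0, 0), (1, 0, 0, -1), (0, 0, 1, 1), (0, 0, -1, 1)), ((-1, -1, 0, 0), (0, 1, -1, 0), (1, -1, 0, 0), (0, 0, 1, 1)), ((0, 0, 1, -1), (0, 1, -1, 0), (-1, -1, 0, 0), (0, 0, 1, 1))),
  (((0, 0, -1, 1), (-1, 0, 0, -1), (1, -1, 0, 0), (1, 1, 0, 0)), ((-1, -1, 0, 0), (1, 0, 0, 1), (0, 0, -1, -1), (0, 0, 1, -1)), ((-1, -1, 0, 0), (0, 1, -1, 0), (1, -1, 0, 0), (0, 0, 1, -1)), ((0, 0, 1, -1), (0, 1, -1, 0), (0, 0, 1, 1), (-1, -1, 0, 0))),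
  (((0, 0, -1, 1), (-1, 0, 0, -1), (1, -1, 0, 0), (1, 1, 0, 0)), ((0, 0, -1, -1), (-1, 0, 0, 1), (1, 1, 0, 0), (1, -1, 0, 0)), ((-1, -1, 0, 0), (0, 1, 0, -1), (0, 0, -1, 1), (1, -1, 0, 0)), ((0, 0, 1, 1), (0, 1, 0, -1), (0, 0, -1, 1), (-1, -1, 0, 0))),
  (((0, 0, -1, 1), (-1, 0, 0, -1), (1, -1, 0, 0), (1, 1, 0, 0)), ((0, 0, -1, -1), (0, 1, 1, 0), (-1, -1, 0, 0), (1, -1, 0, 0)), ((-1, -1, 0, 0), (0, 1, -1, 0), (0, 0, 1, -1), (1, -1, 0, 0)), ((0, 0, 1, 1), (0, 1, -1, 0), (0, 0, 1, -1), (-1, -1, 0, 0))),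
  (((0, 0, -1, 1), (-1, 0, 0, -1), (1, -1, 0, 0), (1, 1, 0, 0)), ((0, 0, -1, 1), (-1, 0, 0, -1), (1, -1, 0, 0), (1, 1, 0, 0)), ((-1, -1, 0, 0), (0, 1, 0, 1), (0, 0, -1, -1), (1, -1, 0, 0)), ((0, 0, 1, 1), (0, 1, 0, -1), (-1, -1, 0, 0), (0, 0, -1, 1))),
  (((0, 0, -1, 1), (-1, 0, 0, -1), (1, -1, 0, 0), (1, 1, 0, 0)), ((0, 0, -1, 1), (0, 1, 1, 0), (1, -1, 0, 0), (-1, -1, 0, 0)), ((-1, -1, 0, 0), (0, 1, -1, 0), (0, 0, 1, 1), (1, -1, 0, 0)), ((0, 0, 1, 1), (0, 1, -1, 0), (-1, -1, 0, 0), (0, 0, 1, -1))),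
  (((0, 0, -1, 1), (-1, 0, 0, -1), (1, -1, 0, 0), (1, 1, 0, 0)), ((0, 0, 1, -1), (0, -1, -1, 0), (-1, 1, 0, 0), (1, 1, 0, 0)), ((-1, -1, 0, 0), (0, 1, 0, 1), (0, 0, -1, -1), (0, 0, 1, -1)), ((-1, -1, 0, 0), (0, 1, 0, -1), (0, 0, 1, 1), (0, 0, -1, 1))),
  (((0, 0, -1, 1), (-1, 0, 0, -1), (1, -1, 0, 0), (1, 1, 0, 0)), ((0, 0, 1, -1), (1, 0, 0, 1), (-1, 1, 0, 0), (-1, -1, 0, 0)), ((-1, -1, 0, 0), (0, 1, -1, 0), (0, 0, 1, 1), (0, 0, 1, -1)), ((-1, -1, 0, 0), (0, 1, -1, 0), (0, 0, 1, 1), (0, 0, 1, -1))),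
  (((0, 0, -1, 1), (-1, 0, 0, -1), (1, -1, 0, 0), (1, 1, 0, 0)), ((0, 0, 1, 1), (0, -1, -1, 0), (1, 1, 0, 0), (-1, 1, 0, 0)), ((-1, -1, 0, 0), (0, 1, 0, -1), (0, 0, -1, 1), (0, 0, 1, 1)), ((-1, -1, 0, 0), (0, 1, 0, -1), (0, 0, -1, 1), (0, 0, 1, 1))),
  (((0, 0, -1, 1), (-1, 0, 0, -1), (1, -1, 0, 0), (1, 1, 0, 0)), ((0, 0, 1, 1), (1, 0, 0, -1), (-1, -1, 0, 0), (-1, 1, 0, 0)), ((-1, -1, 0, 0), (0, 1, -1, 0), (0, 0, 1, -1), (0, 0, 1, 1)), ((-1, -1, 0, 0), (0, 1, -1, 0), (0, 0, 1, -1), (0, 0, 1, 1))),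
  (((0, 0, -1, 1), (-1, 0, 0, -1), (1, -1, 0, 0), (1, 1, 0, 0)), ((1, 1, 0, 0), (-1, 0, 0, -1), (0, 0, 1, 1), (0, 0, -1, 1)), ((-1, -1, 0, 0), (1, 0, -1, 0), (-1, 1, 0, 0), (0, 0, 1, 1)), ((0, 0, -1, 1), (0, 1, 0, -1), (-1, -1, 0, 0), (0, 0, 1, 1))),
  (((0, 0, -1, 1), (-1, 0, 0, -1), (1, -1, 0, 0), (1, 1, 0, 0)), ((1, 1, 0, 0), (-1, 0, 0, 1), (0, 0, -1, -1), (0, 0, 1, -1)), ((-1, -1, 0, 0), (1, 0, -1, 0), (-1, 1, 0, 0), (0, 0, 1, -1)), ((0, 0, -1, 1), (0, 1, 0, -1), (0, 0, 1, 1), (-1, -1, 0, 0)))]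

def pt5 : List (Cfg × Cfg × Cfg × Cfg) := [
  (((0, 0, -1, 1), (0, 1, 1, 0), (1, -1, 0, 0), (-1, -1, 0, 0)), ((-1, -1, 0, 0), (1, 0, 0, -1), (0, 0, 1, 1), (0, 0, -1, 1)), ((-1, -1, 0, 0), (0, 1, -1, 0), (1, -1, 0, 0), (0, 0, 1, -1)), ((0, 0, 1, -1), (0, 1, -1, 0), (0, 0, 1, 1), (-1, -1, 0, 0))),
  (((0, 0, -1, 1), (0, 1, 1, 0), (1, -1, 0, 0), (-1, -1, 0, 0)), ((-1, -1, 0, 0), (1, 0, 0, 1), (0, 0, -1, -1), (0, 0, 1, -1)), ((-1, -1, 0, 0), (0, 1, -1, 0), (1, -1, 0, 0), (0, 0, 1, 1)), ((0, 0, 1, -1), (0, 1, -1, 0), (-1, -1, 0, 0), (0, 0, 1, 1))),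
  (((0, 0, -1, 1), (0, 1, 1, 0), (1, -1, 0, 0), (-1, -1, 0, 0)), ((0, 0, -1, -1), (-1, 0, 0, 1), (1, 1, 0, 0), (1, -1, 0, 0)), ((-1, -1, 0, 0), (0, 1, 0, -1), (0, 0, -1, 1), (0, 0, 1, 1)), ((-1, -1, 0, 0), (0, 1, 0, -1), (0, 0, -1, 1), (0, 0, 1, 1))),
  (((0, 0, -1, 1), (0, 1, 1, 0), (1, -1, 0, 0), (-1, -1, 0, 0)), ((0, 0, -1, -1), (0, 1, 1, 0), (-1, -1, 0, 0), (1, -1, 0, 0)), ((-1, -1, 0, 0), (0, 1, -1, 0), (0, 0, 1, -1), (0, 0, 1, 1)), ((-1, -1, 0, 0), (0, 1, -1, 0), (0, 0, 1, -1), (0, 0, 1, 1))),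
  (((0, 0, -1, 1), (0, 1, 1, 0), (1, -1, 0, 0), (-1, -1, 0, 0)), ((0, 0, -1, 1), (-1, 0, 0, -1), (1, -1, 0, 0), (1, 1, 0, 0)), ((-1, -1, 0, 0), (0, 1, 0, 1), (0, 0, -1, -1), (0, 0, 1, -1)), ((-1, -1, 0, 0), (0, 1, 0, -1), (0, 0, 1, 1), (0, 0, -1, 1))),
  (((0, 0, -1, 1), (0, 1, 1, 0), (1, -1, 0, 0), (-1, -1, 0, 0)), ((0, 0, -1, 1), (0, 1, 1, 0), (1, -1, 0, 0), (-1, -1, 0, 0)), ((-1, -1, 0, 0), (0, 1, -1, 0), (0, 0, 1, 1), (0, 0, 1, -1)), ((-1, -1, 0, 0), (0, 1, -1, 0), (0, 0, 1, 1), (0, 0, 1, -1))),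
  (((0, 0, -1, 1), (0, 1, 1, 0), (1, -1, 0, 0), (-1, -1, 0, 0)), ((0, 0, 1, -1), (0, -1, -1, 0), (-1, 1, 0, 0), (1, 1, 0, 0)), ((-1, -1, 0, 0), (0, 1, 0, 1), (0, 0, -1, -1), (1, -1, 0, 0)), ((0, 0, 1, 1), (0, 1, 0, -1), (-1, -1, 0, 0), (0, 0, -1, 1))),
  (((0, 0, -1, 1), (0, 1, 1, 0), (1, -1, 0, 0), (-1, -1, 0, 0)), ((0, 0, 1, -1), (1, 0, 0, 1), (-1, 1, 0, 0), (-1, -1, 0, 0)), ((-1, -1, 0, 0), (0, 1, -1, 0), (0, 0, 1, 1), (1, -1, 0, 0)), ((0, 0, 1, 1), (0, 1, -1, 0), (-1, -1, 0, 0), (0, 0, 1, -1))),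
  (((0, 0, -1, 1), (0, 1, 1, 0), (1, -1, 0, 0), (-1, -1, 0, 0)), ((0, 0, 1, 1), (0, -1, -1, 0), (1, 1, 0, 0), (-1, 1, 0, 0)), ((-1, -1, 0, 0), (0, 1, 0, -1), (0, 0, -1, 1), (1, -1, 0, 0)), ((0, 0, 1, 1), (0, 1, 0, -1), (0, 0, -1, 1), (-1, -1, 0, 0))),
  (((0, 0, -1, 1), (0, 1, 1, 0), (1, -1, 0, 0), (-1, -1, 0, 0)), ((0, 0, 1, 1), (1, 0, 0, -1), (-1, -1, 0, 0), (-1, 1, 0, 0)), ((-1, -1, 0, 0), (0, 1, -1, 0), (0, 0, 1, -1), (1, -1, 0, 0)), ((0, 0, 1, 1), (0, 1, -1, 0), (0, 0, 1, -1), (-1, -1, 0, 0))),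
  (((0, 0, -1, 1), (0, 1, 1, 0), (1, -1, 0, 0), (-1, -1, 0, 0)), ((1, 1, 0, 0), (-1, 0, 0, -1), (0, 0, 1, 1), (0, 0, -1, 1)), ((-1, -1, 0, 0), (1, 0, -1, 0), (-1, 1, 0, 0), (0, 0, 1, -1)), ((0, 0, -1, 1), (0, 1, 0, -1), (0, 0, 1, 1), (-1, -1, 0, 0))),
  (((0, 0, -1, 1), (0, 1, 1, 0), (1, -1, 0, 0), (-1, -1, 0, 0)), ((1, 1, 0, 0), (-1, 0, 0, 1), (0, 0, -1, -1), (0, 0, 1, -1)), ((-1, -1, 0, 0), (1, 0, -1, 0), (-1, 1, 0, 0), (0, 0, 1, 1)), ((0, 0, -1, 1), (0, 1, 0, -1), (-1, -1, 0, 0), (0, 0, 1, 1)))]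

def pt6 : List (Cfg × Cfg × Cfg × Cfg) := [
  (((0, 0, 1, -1), (0, -1, -1, 0), (-1, 1, 0, 0), (1, 1, 0, 0)), ((-1, -1, 0, 0), (1, 0, 0, -1), (0, 0, 1, 1), (0, 0, -1, 1)), ((-1, -1, 0, 0), (1, 0, -1, 0), (-1, 1, 0, 0), (0, 0, 1, 1)), ((0, 0, -1, 1), (0, 1, 0, -1), (-1, -1, 0, 0), (0, 0, 1, 1))),
  (((0, 0, 1, -1), (0, -1, -1, 0), (-1, 1, 0, 0), (1, 1, 0, 0)), ((-1, -1, 0, 0), (1, 0, 0, 1), (0, 0, -1, -1), (0, 0, 1, -1)), ((-1, -1, 0, 0), (1, 0, -1, 0), (-1, 1, 0, 0), (0, 0, 1, -1)), ((0, 0, -1, 1), (0, 1, 0, -1), (0, 0, 1, 1), (-1, -1, 0, 0))),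
  (((0, 0, 1, -1), (0, -1, -1, 0), (-1, 1, 0, 0), (1, 1, 0, 0)), ((0, 0, -1, -1), (-1, 0, 0, 1), (1, 1, 0, 0), (1, -1, 0, 0)), ((-1, -1, 0, 0), (0, 1, -1, 0), (0, 0, 1, -1), (1, -1, 0, 0)), ((0, 0, 1, 1), (0, 1, -1, 0), (0, 0, 1, -1), (-1, -1, 0, 0))),
  (((0, 0, 1, -1), (0, -1, -1, 0), (-1, 1, 0, 0), (1, 1, 0, 0)), ((0, 0, -1, -1), (0, 1, 1, 0), (-1, -1, 0, 0), (1, -1, 0, 0)), ((-1, -1, 0, 0), (0, 1, 0, -1), (0, 0, -1, 1), (1, -1, 0, 0)), ((0, 0, 1, 1), (0, 1, 0, -1), (0, 0, -1, 1), (-1, -1, 0, 0))),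
  (((0, 0, 1, -1), (0, -1, -1, 0), (-1, 1, 0, 0), (1, 1, 0, 0)), ((0, 0, -1, 1), (-1, 0, 0, -1), (1, -1, 0, 0), (1, 1, 0, 0)), ((-1, -1, 0, 0), (0, 1, -1, 0), (0, 0, 1, 1), (1, -1, 0, 0)), ((0, 0, 1, 1), (0, 1, -1, 0), (-1, -1, 0, 0), (0, 0, 1, -1))),
  (((0, 0, 1, -1), (0, -1, -1, 0), (-1, 1, 0, 0), (1, 1, 0, 0)), ((0, 0, -1, 1), (0, 1, 1, 0), (1, -1, 0, 0), (-1, -1, 0, 0)), ((-1, -1, 0, 0), (0, 1, 0, 1), (0, 0, -1, -1), (1, -1, 0, 0)), ((0, 0, 1, 1), (0, 1, 0, -1), (-1, -1, 0, 0), (0, 0, -1, 1))),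
  (((0, 0, 1, -1), (0, -1, -1, 0), (-1, 1, 0, 0), (1, 1, 0, 0)), ((0, 0, 1, -1), (0, -1, -1, 0), (-1, 1, 0, 0), (1, 1, 0, 0)), ((-1, -1, 0, 0), (0, 1, -1, 0), (0, 0, 1, 1), (0, 0, 1, -1)), ((-1, -1, 0, 0), (0, 1, -1, 0), (0, 0, 1, 1), (0, 0, 1, -1))),
  (((0, 0, 1, -1), (0, -1, -1, 0), (-1, 1, 0, 0), (1, 1, 0, 0)), ((0, 0, 1, -1), (1, 0, 0, 1), (-1, 1, 0, 0), (-1, -1, 0, 0)), ((-1, -1, 0, 0), (0, 1, 0, 1), (0, 0, -1, -1), (0, 0, 1, -1)), ((-1, -1, 0, 0), (0, 1, 0, -1), (0, 0, 1, 1), (0, 0, -1, 1))),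
  (((0, 0, 1, -1), (0, -1, -1, 0), (-1, 1, 0, 0), (1, 1, 0, 0)), ((0, 0, 1, 1), (0, -1, -1, 0), (1, 1, 0, 0), (-1, 1, 0, 0)), ((-1, -1, 0, 0), (0, 1, -1, 0), (0, 0, 1, -1), (0, 0, 1, 1)), ((-1, -1, 0, 0), (0, 1, -1, 0), (0, 0, 1, -1), (0, 0, 1, 1))),
  (((0, 0, 1, -1), (0, -1, -1, 0), (-1, 1, 0, 0), (1, 1, 0, 0)), ((0, 0, 1, 1), (1, 0, 0, -1), (-1, -1, 0, 0), (-1, 1, 0, 0)), ((-1, -1, 0, 0), (0, 1, 0, -1), (0, 0, -1, 1), (0, 0, 1, 1)), ((-1, -1, 0, 0), (0, 1, 0, -1), (0, 0, -1, 1), (0, 0, 1, 1))),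
  (((0, 0, 1, -1), (0, -1, -1, 0), (-1, 1, 0, 0), (1, 1, 0, 0)), ((1, 1, 0, 0), (-1, 0, 0, -1), (0, 0, 1, 1), (0, 0, -1, 1)), ((-1, -1, 0, 0), (0, 1, -1, 0), (1, -1, 0, 0), (0, 0, 1, 1)), ((0, 0, 1, -1), (0, 1, -1, 0), (-1, -1, 0, 0), (0, 0, 1, 1))),
  (((0, 0, 1, -1), (0, -1, -1, 0), (-1, 1, 0, 0), (1, 1, 0, 0)), ((1, 1, 0, 0), (-1, 0, 0, 1), (0, 0, -1, -1), (0, 0, 1, -1)), ((-1, -1, 0, 0), (0, 1, -1, 0), (1, -1, 0, 0), (0, 0, 1, -1)), ((0, 0, 1, -1), (0, 1, -1, 0), (0, 0, 1, 1), (-1, -1, 0, 0)))]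

def pt7 : List (Cfg × Cfg × Cfg × Cfg) := [
  (((0, 0, 1, -1), (1, 0, 0, 1), (-1, 1, 0, 0), (-1, -1, 0, 0)), ((-1, -1, 0, 0), (1, 0, 0, -1), (0, 0, 1, 1), (0, 0, -1, 1)), ((-1, -1, 0, 0), (1, 0, -1, 0), (-1, 1, 0, 0), (0, 0, 1, -1)), ((0, 0, -1, 1), (0, 1, 0, -1), (0, 0, 1, 1), (-1, -1, 0, 0))),
  (((0, 0, 1, -1), (1, 0, 0, 1), (-1, 1, 0, 0), (-1, -1, 0, 0)), ((-1, -1, 0, 0), (1, 0, 0, 1), (0, 0, -1, -1), (0, 0, 1, -1)), ((-1, -1, 0, 0), (1, 0, -1, 0), (-1, 1, 0, 0), (0, 0, 1, 1)), ((0, 0, -1, 1), (0, 1, 0, -1), (-1, -1, 0, 0), (0, 0, 1, 1))),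
  (((0, 0, 1, -1), (1, 0, 0, 1), (-1, 1, 0, 0), (-1, -1, 0, 0)), ((0, 0, -1, -1), (-1, 0, 0, 1), (1, 1, 0, 0), (1, -1, 0, 0)), ((-1, -1, 0, 0), (0, 1, -1, 0), (0, 0, 1, -1), (0, 0, 1, 1)), ((-1, -1, 0, 0), (0, 1, -1, 0), (0, 0, 1, -1), (0, 0, 1, 1))),
  (((0, 0, 1, -1), (1, 0, 0, 1), (-1, 1, 0, 0), (-1, -1, 0, 0)), ((0, 0, -1, -1), (0, 1, 1, 0), (-1, -1, 0, 0), (1, -1, 0, 0)), ((-1, -1, 0, 0), (0, 1, 0, -1), (0, 0, -1, 1), (0, 0, 1, 1)), ((-1, -1, 0, 0), (0, 1, 0, -1), (0, 0, -1, 1), (0, 0, 1, 1))),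
  (((0, 0, 1, -1), (1, 0, 0, 1), (-1, 1, 0, 0), (-1, -1, 0, 0)), ((0, 0, -1, 1), (-1, 0, 0, -1), (1, -1, 0, 0), (1, 1, 0, 0)), ((-1, -1, 0, 0), (0, 1, -1, 0), (0, 0, 1, 1), (0, 0, 1, -1)), ((-1, -1, 0, 0), (0, 1, -1, 0), (0, 0, 1, 1), (0, 0, 1, -1))),
  (((0, 0, 1, -1), (1, 0, 0, 1), (-1, 1, 0, 0), (-1, -1, 0, 0)), ((0, 0, -1, 1), (0, 1, 1, 0), (1, -1, 0, 0), (-1, -1, 0, 0)), ((-1, -1, 0, 0), (0, 1, 0, 1), (0, 0, -1, -1), (0, 0, 1, -1)), ((-1, -1, 0, 0), (0, 1, 0, -1), (0, 0, 1, 1), (0, 0, -1, 1))),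
  (((0, 0, 1, -1), (1, 0, 0, 1), (-1, 1, 0, 0), (-1, -1, 0, 0)), ((0, 0, 1, -1), (0, -1, -1, 0), (-1, 1, 0, 0), (1, 1, 0, 0)), ((-1, -1, 0, 0), (0, 1, -1, 0), (0, 0, 1, 1), (1, -1, 0, 0)), ((0, 0, 1, 1), (0, 1, -1, 0), (-1, -1, 0, 0), (0, 0, 1, -1))),
  (((0, 0, 1, -1), (1, 0, 0, 1), (-1, 1, 0, 0), (-1, -1, 0, 0)), ((0, 0, 1, -1), (1, 0, 0, 1), (-1, 1, 0, 0), (-1, -1, 0, 0)), ((-1, -1, 0, 0), (0, 1, 0, 1), (0, 0, -1, -1), (1, -1, 0, 0)), ((0, 0, 1, 1), (0, 1, 0, -1), (-1, -1, 0, 0), (0, 0, -1, 1))),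
  (((0, 0, 1, -1), (1, 0, 0, 1), (-1, 1, 0, 0), (-1, -1, 0, 0)), ((0, 0, 1, 1), (0, -1, -1, 0), (1, 1, 0, 0), (-1, 1, 0, 0)), ((-1, -1, 0, 0), (0, 1, -1, 0), (0, 0, 1, -1), (1, -1, 0, 0)), ((0, 0, 1, 1), (0, 1, -1, 0), (0, 0, 1, -1), (-1, -1, 0, 0))),
  (((0, 0, 1, -1), (1, 0, 0, 1), (-1, 1, 0, 0), (-1, -1, 0, 0)), ((0, 0, 1, 1), (1, 0, 0, -1), (-1, -1, 0, 0), (-1, 1, 0, 0)), ((-1, -1, 0, 0), (0, 1, 0, -1), (0, 0, -1, 1), (1, -1, 0, 0)), ((0, 0, 1, 1), (0, 1, 0, -1), (0, 0, -1, 1), (-1, -1, 0, 0))),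
  (((0, 0, 1, -1), (1, 0, 0, 1), (-1, 1, 0, 0), (-1, -1, 0, 0)), ((1, 1, 0, 0), (-1, 0, 0, -1), (0, 0, 1, 1), (0, 0, -1, 1)), ((-1, -1, 0, 0), (0, 1, -1, 0), (1, -1, 0, 0), (0, 0, 1, -1)), ((0, 0, 1, -1), (0, 1, -1, 0), (0, 0, 1, 1), (-1, -1, 0, 0))),
  (((0, 0, 1, -1), (1, 0, 0, 1), (-1, 1, 0, 0), (-1, -1, 0, 0)), ((1, 1, 0, 0), (-1, 0, 0, 1), (0, 0, -1, -1), (0, 0, 1, -1)), ((-1, -1, 0, 0), (0, 1, -1, 0), (1, -1, 0, 0), (0, 0, 1, 1)), ((0, 0, 1, -1), (0, 1, -1, 0), (-1, -1, 0, 0), (0, 0, 1, 1)))]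

def pt8 : List (Cfg × Cfg × Cfg × Cfg) := [
  (((0, 0, 1, 1), (0, -1, -1, 0), (1, 1, 0, 0), (-1, 1, 0, 0)), ((-1, -1, 0, 0), (1, 0, 0, -1), (0, 0, 1, 1), (0, 0, -1, 1)), ((-1, -1, 0, 0), (1, 0, -1, 0), (0, 0, 1, 1), (-1, 1, 0, 0)), ((0, 0, -1, -1), (0, 1, 0, 1), (-1, -1, 0, 0), (0, 0, 1, -1))),
  (((0, 0, 1, 1), (0, -1, -1, 0), (1, 1, 0, 0), (-1, 1, 0, 0)), ((-1, -1, 0, 0), (1, 0, 0, 1), (0, 0, -1, -1), (0, 0, 1, -1)), ((-1, -1, 0, 0), (1, 0, -1, 0), (0, 0, 1, -1), (-1, 1, 0, 0)), ((0, 0, -1, -1), (0, 1, 0, 1), (0, 0, 1, -1), (-1, -1, 0, 0))),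
  (((0, 0, 1, 1), (0, -1, -1, 0), (1, 1, 0, 0), (-1, 1, 0, 0)), ((0, 0, -1, -1), (-1, 0, 0, 1), (1, 1, 0, 0), (1, -1, 0, 0)), ((-1, -1, 0, 0), (0, 1, -1, 0), (1, -1, 0, 0), (0, 0, 1, -1)), ((0, 0, 1, -1), (0, 1, -1, 0), (0, 0, 1, 1), (-1, -1, 0, 0))),
  (((0, 0, 1, 1), (0, -1, -1, 0), (1, 1, 0, 0), (-1, 1, 0, 0)), ((0, 0, -1, -1), (0, 1, 1, 0), (-1, -1, 0, 0), (1, -1, 0, 0)), ((-1, -1, 0, 0), (0, 1, 0, -1), (1, -1, 0, 0), (0, 0, -1, 1)), ((0, 0, 1, -1), (0, 1, 0, 1), (0, 0, -1, -1), (-1, -1, 0, 0))),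
  (((0, 0, 1, 1), (0, -1, -1, 0), (1, 1, 0, 0), (-1, 1, 0, 0)), ((0, 0, -1, 1), (-1, 0, 0, -1), (1, -1, 0, 0), (1, 1, 0, 0)), ((-1, -1, 0, 0), (0, 1, -1, 0), (1, -1, 0, 0), (0, 0, 1, 1)), ((0, 0, 1, -1), (0, 1, -1, 0), (-1, -1, 0, 0), (0, 0, 1, 1))),
  (((0, 0, 1, 1), (0, -1, -1, 0), (1, 1, 0, 0), (-1, 1, 0, 0)), ((0, 0, -1, 1), (0, 1, 1, 0), (1, -1, 0, 0), (-1, -1, 0, 0)), ((-1, -1, 0, 0), (0, 1, 0, 1), (1, -1, 0, 0), (0, 0, -1, -1)), ((0, 0, 1, -1), (0, 1, 0, 1), (-1, -1, 0, 0), (0, 0, -1, -1))),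
  (((0, 0, 1, 1), (0, -1, -1, 0), (1, 1, 0, 0), (-1, 1, 0, 0)), ((0, 0, 1, -1), (0, -1, -1, 0), (-1, 1, 0, 0), (1, 1, 0, 0)), ((-1, -1, 0, 0), (0, 1, -1, 0), (0, 0, 1, -1), (0, 0, 1, 1)), ((-1, -1, 0, 0), (0, 1, -1, 0), (0, 0, 1, -1), (0, 0, 1, 1))),
  (((0, 0, 1, 1), (0, -1, -1, 0), (1, 1, 0, 0), (-1, 1, 0, 0)), ((0, 0, 1, -1), (1, 0, 0, 1), (-1, 1, 0, 0), (-1, -1, 0, 0)), ((-1, -1, 0, 0), (0, 1, 0, 1), (0, 0, 1, -1), (0, 0, -1, -1)), ((-1, -1, 0, 0), (0, 1, 0, 1), (0, 0, 1, -1), (0, 0, -1, -1))),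
  (((0, 0, 1, 1), (0, -1, -1, 0), (1, 1, 0, 0), (-1, 1, 0, 0)), ((0, 0, 1, 1), (0, -1, -1, 0), (1, 1, 0, 0), (-1, 1, 0, 0)), ((-1, -1, 0, 0), (0, 1, -1, 0), (0, 0, 1, 1), (0, 0, 1, -1)), ((-1, -1, 0, 0), (0, 1, -1, 0), (0, 0, 1, 1), (0, 0, 1, -1))),
  (((0, 0, 1, 1), (0, -1, -1, 0), (1, 1, 0, 0), (-1, 1, 0, 0)), ((0, 0, 1, 1), (1, 0, 0, -1), (-1, -1, 0, 0), (-1, 1, 0, 0)), ((-1, -1, 0, 0), (0, 1, 0, -1), (0, 0, 1, 1), (0, 0, -1, 1)), ((-1, -1, 0, 0), (0, 1, 0, 1), (0, 0, -1, -1), (0, 0, 1, -1))),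
  (((0, 0, 1, 1), (0, -1, -1, 0), (1, 1, 0, 0), (-1, 1, 0, 0)), ((1, 1, 0, 0), (-1, 0, 0, -1), (0, 0, 1, 1), (0, 0, -1, 1)), ((-1, -1, 0, 0), (0, 1, -1, 0), (0, 0, 1, 1), (1, -1, 0, 0)), ((0, 0, 1, 1), (0, 1, -1, 0), (-1, -1, 0, 0), (0, 0, 1, -1))),
  (((0, 0, 1, 1), (0, -1, -1, 0), (1, 1, 0, 0), (-1, 1, 0, 0)), ((1, 1, 0, 0), (-1, 0, 0, 1), (0, 0, -1, -1), (0, 0, 1, -1)), ((-1, -1, 0, 0), (0, 1, -1, 0), (0, 0, 1, -1), (1, -1, 0, 0)), ((0, 0, 1, 1), (0, 1, -1, 0), (0, 0, 1, -1), (-1, -1, 0, 0)))]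

def pt9 : List (Cfg × Cfg × Cfg × Cfg) := [
  (((0, 0, 1, 1), (1, 0, 0, -1), (-1, -1, 0, 0), (-1, 1, 0, 0)), ((-1, -1, 0, 0), (1, 0, 0, -1), (0, 0, 1, 1), (0, 0, -1, 1)), ((-1, -1, 0, 0), (1, 0, -1, 0), (0, 0, 1, -1), (-1, 1, 0, 0)), ((0, 0, -1, -1), (0, 1, 0, 1), (0, 0, 1, -1), (-1, -1, 0, 0))),
  (((0, 0, 1, 1), (1, 0, 0, -1), (-1, -1, 0, 0), (-1, 1, 0, 0)), ((-1, -1, 0, 0), (1, 0, 0, 1), (0, 0, -1, -1), (0, 0, 1, -1)), ((-1, -1, 0, 0), (1, 0, -1, 0), (0, 0, 1, 1), (-1, 1, 0, 0)), ((0, 0, -1, -1), (0, 1, 0, 1), (-1, -1, 0, 0), (0, 0, 1, -1))),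
  (((0, 0, 1, 1), (1, 0, 0, -1), (-1, -1, 0, 0), (-1, 1, 0, 0)), ((0, 0, -1, -1), (-1, 0, 0, 1), (1, 1, 0, 0), (1, -1, 0, 0)), ((-1, -1, 0, 0), (0, 1, -1, 0), (0, 0, 1, 1), (0, 0, 1, -1)), ((-1, -1, 0, 0), (0, 1, -1, 0), (0, 0, 1, 1), (0, 0, 1, -1))),
  (((0, 0, 1, 1), (1, 0, 0, -1), (-1, -1, 0, 0), (-1, 1, 0, 0)), ((0, 0, -1, -1), (0, 1, 1, 0), (-1, -1, 0, 0), (1, -1, 0, 0)), ((-1, -1, 0, 0), (0, 1, 0, -1), (0, 0, 1, 1), (0, 0, -1, 1)), ((-1, -1, 0, 0), (0, 1, 0, 1), (0, 0, -1, -1), (0, 0, 1, -1))),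
  (((0, 0, 1, 1), (1, 0, 0, -1), (-1, -1, 0, 0), (-1, 1, 0, 0)), ((0, 0, -1, 1), (-1, 0, 0, -1), (1, -1, 0, 0), (1, 1, 0, 0)), ((-1, -1, 0, 0), (0, 1, -1, 0), (0, 0, 1, -1), (0, 0, 1, 1)), ((-1, -1, 0, 0), (0, 1, -1, 0), (0, 0, 1, -1), (0, 0, 1, 1))),
  (((0, 0, 1, 1), (1, 0, 0, -1), (-1, -1, 0, 0), (-1, 1, 0, 0)), ((0, 0, -1, 1), (0, 1, 1, 0), (1, -1, 0, 0), (-1, -1, 0, 0)), ((-1, -1, 0, 0), (0, 1, 0, 1), (0, 0, 1, -1), (0, 0, -1, -1)), ((-1, -1, 0, 0), (0, 1, 0, 1), (0, 0, 1, -1), (0, 0, -1, -1))),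
  (((0, 0, 1, 1), (1, 0, 0, -1), (-1, -1, 0, 0), (-1, 1, 0, 0)), ((0, 0, 1, -1), (0, -1, -1, 0), (-1, 1, 0, 0), (1, 1, 0, 0)), ((-1, -1, 0, 0), (0, 1, -1, 0), (1, -1, 0, 0), (0, 0, 1, 1)), ((0, 0, 1, -1), (0, 1, -1, 0), (-1, -1, 0, 0), (0, 0, 1, 1))),
  (((0, 0, 1, 1), (1, 0, 0, -1), (-1, -1, 0, 0), (-1, 1, 0, 0)), ((0, 0, 1, -1), (1, 0, 0, 1), (-1, 1, 0, 0), (-1, -1, 0, 0)), ((-1, -1, 0, 0), (0, 1, 0, 1), (1, -1, 0, 0), (0, 0, -1, -1)), ((0, 0, 1, -1), (0, 1, 0, 1), (-1, -1, 0, 0), (0, 0, -1, -1))),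
  (((0, 0, 1, 1), (1, 0, 0, -1), (-1, -1, 0, 0), (-1, 1, 0, 0)), ((0, 0, 1, 1), (0, -1, -1, 0), (1, 1, 0, 0), (-1, 1, 0, 0)), ((-1, -1, 0, 0), (0, 1, -1, 0), (1, -1, 0, 0), (0, 0, 1, -1)), ((0, 0, 1, -1), (0, 1, -1, 0), (0, 0, 1, 1), (-1, -1, 0, 0))),
  (((0, 0, 1, 1), (1, 0, 0, -1), (-1, -1, 0, 0), (-1, 1, 0, 0)), ((0, 0, 1, 1), (1, 0, 0, -1), (-1, -1, 0, 0), (-1, 1, 0, 0)), ((-1, -1, 0, 0), (0, 1, 0, -1), (1, -1, 0, 0), (0, 0, -1, 1)), ((0, 0, 1, -1), (0, 1, 0, 1), (0, 0, -1, -1), (-1, -1, 0, 0))),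
  (((0, 0, 1, 1), (1, 0, 0, -1), (-1, -1, 0, 0), (-1, 1, 0, 0)), ((1, 1, 0, 0), (-1, 0, 0, -1), (0, 0, 1, 1), (0, 0, -1, 1)), ((-1, -1, 0, 0), (0, 1, -1, 0), (0, 0, 1, -1), (1, -1, 0, 0)), ((0, 0, 1, 1), (0, 1, -1, 0), (0, 0, 1, -1), (-1, -1, 0, 0))),
  (((0, 0, 1, 1), (1, 0, 0, -1), (-1, -1, 0, 0), (-1, 1, 0, 0)), ((1, 1, 0, 0), (-1, 0, 0, 1), (0, 0, -1, -1), (0, 0, 1, -1)), ((-1, -1, 0, 0), (0, 1, -1, 0), (0, 0, 1, 1), (1, -1, 0, 0)), ((0, 0, 1, 1), (0, 1, -1, 0), (-1, -1, 0, 0), (0, 0, 1, -1)))]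

def pt10 : List (Cfg × Cfg × Cfg × Cfg) := [
  (((1, 1, 0, 0), (-1, 0, 0, -1), (0, 0, 1, 1), (0, 0, -1, 1)), ((-1, -1, 0, 0), (1, 0, 0, -1), (0, 0, 1, 1), (0, 0, -1, 1)), ((-1, -1, 0, 0), (0, 1, -1, 0), (0, 0, 1, -1), (0, 0, 1, 1)), ((-1, -1, 0, 0), (0, 1, -1, 0), (0, 0, 1, -1), (0, 0, 1, 1))),
  (((1, 1, 0, 0), (-1, 0, 0, -1), (0, 0, 1, 1), (0, 0, -1, 1)), ((-1, -1, 0, 0), (1, 0, 0, 1), (0, 0, -1, -1), (0, 0, 1, -1)), ((-1, -1, 0, 0), (0, 1, -1, 0), (0, 0, 1, 1), (0, 0, 1, -1)), ((-1, -1, 0, 0), (0, 1, -1, 0), (0, 0, 1, 1), (0, 0, 1, -1))),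
  (((1, 1, 0, 0), (-1, 0, 0, -1), (0, 0, 1, 1), (0, 0, -1, 1)), ((0, 0, -1, -1), (-1, 0, 0, 1), (1, 1, 0, 0), (1, -1, 0, 0)), ((-1, -1, 0, 0), (0, 1, 0, -1), (0, 0, 1, 1), (1, -1, 0, 0)), ((0, 0, 1, 1), (-1, 0, -1, 0), (1, 1, 0, 0), (0, 0, 1, -1))),
  (((1, 1, 0, 0), (-1, 0, 0, -1), (0, 0, 1, 1), (0, 0, -1, 1)), ((0, 0, -1, -1), (0, 1, 1, 0), (-1, -1, 0, 0), (1, -1, 0, 0)), ((-1, -1, 0, 0), (0, 1, -1, 0), (0, 0, 1, 1), (1, -1, 0, 0)), ((0, 0, 1, 1), (0, 1, -1, 0), (-1, -1, 0, 0), (0, 0, 1, -1))),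
  (((1, 1, 0, 0), (-1, 0, 0, -1), (0, 0, 1, 1), (0, 0, -1, 1)), ((0, 0, -1, 1), (-1, 0, 0, -1), (1, -1, 0, 0), (1, 1, 0, 0)), ((-1, -1, 0, 0), (0, 1, 0, 1), (0, 0, 1, -1), (1, -1, 0, 0)), ((0, 0, 1, 1), (-1, 0, -1, 0), (0, 0, 1, -1), (1, 1, 0, 0))),
  (((1, 1, 0, 0), (-1, 0, 0, -1), (0, 0, 1, 1), (0, 0, -1, 1)), ((0, 0, -1, 1), (0, 1, 1, 0), (1, -1, 0, 0), (-1, -1, 0, 0)), ((-1, -1, 0, 0), (0, 1, -1, 0), (0, 0, 1, -1), (1, -1, 0, 0)), ((0, 0, 1, 1), (0, 1, -1, 0), (0, 0, 1, -1), (-1, -1, 0, 0))),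
  (((1, 1, 0, 0), (-1, 0, 0, -1), (0, 0, 1, 1), (0, 0, -1, 1)), ((0, 0, 1, -1), (0, -1, -1, 0), (-1, 1, 0, 0), (1, 1, 0, 0)), ((-1, -1, 0, 0), (0, 1, 0, 1), (1, -1, 0, 0), (0, 0, 1, -1)), ((0, 0, 1, -1), (-1, 0, -1, 0), (0, 0, 1, 1), (1, 1, 0, 0))),
  (((1, 1, 0, 0), (-1, 0, 0, -1), (0, 0, 1, 1), (0, 0, -1, 1)), ((0, 0, 1, -1), (1, 0, 0, 1), (-1, 1, 0, 0), (-1, -1, 0, 0)), ((-1, -1, 0, 0), (0, 1, -1, 0), (1, -1, 0, 0), (0, 0, 1, -1)), ((0, 0, 1, -1), (0, 1, -1, 0), (0, 0, 1, 1), (-1, -1, 0, 0))),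
  (((1, 1, 0, 0), (-1, 0, 0, -1), (0, 0, 1, 1), (0, 0, -1, 1)), ((0, 0, 1, 1), (0, -1, -1, 0), (1, 1, 0, 0), (-1, 1, 0, 0)), ((-1, -1, 0, 0), (0, 1, 0, -1), (1, -1, 0, 0), (0, 0, 1, 1)), ((0, 0, 1, -1), (-1, 0, -1, 0), (1, 1, 0, 0), (0, 0, 1, 1))),
  (((1, 1, 0, 0), (-1, 0, 0, -1), (0, 0, 1, 1), (0, 0, -1, 1)), ((0, 0, 1, 1), (1, 0, 0, -1), (-1, -1, 0, 0), (-1, 1, 0, 0)), ((-1, -1, 0, 0), (0, 1, -1, 0), (1, -1, 0, 0), (0, 0, 1, 1)), ((0, 0, 1, -1), (0, 1, -1, 0), (-1, -1, 0, 0), (0, 0, 1, 1))),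
  (((1, 1, 0, 0), (-1, 0, 0, -1), (0, 0, 1, 1), (0, 0, -1, 1)), ((1, 1, 0, 0), (-1, 0, 0, -1), (0, 0, 1, 1), (0, 0, -1, 1)), ((-1, -1, 0, 0), (1, 0, -1, 0), (0, 0, 1, -1), (0, 0, 1, 1)), ((1, 1, 0, 0), (-1, 0, -1, 0), (0, 0, 1, -1), (0, 0, 1, 1))),
  (((1, 1, 0, 0), (-1, 0, 0, -1), (0, 0, 1, 1), (0, 0, -1, 1)), ((1, 1, 0, 0), (-1, 0, 0, 1), (0, 0, -1, -1), (0, 0, 1, -1)), ((-1, -1, 0, 0), (1, 0, -1, 0), (0, 0, 1, 1), (0, 0, 1, -1)), ((1, 1, 0, 0), (-1, 0, -1, 0), (0, 0, 1, 1), (0, 0, 1, -1)))]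

def pt11 : List (Cfg × Cfg × Cfg × Cfg) := [
  (((1, 1, 0, 0), (-1, 0, 0, 1), (0, 0, -1, -1), (0, 0, 1, -1)), ((-1, -1, 0, 0), (1, 0, 0, -1), (0, 0, 1, 1), (0, 0, -1, 1)), ((-1, -1, 0, 0), (0, 1, -1, 0), (0, 0, 1, 1), (0, 0, 1, -1)), ((-1, -1, 0, 0), (0, 1, -1, 0), (0, 0, 1, 1), (0, 0, 1, -1))),
  (((1, 1, 0, 0), (-1, 0, 0, 1), (0, 0, -1, -1), (0, 0, 1, -1)), ((-1, -1, 0, 0), (1, 0, 0, 1), (0, 0, -1, -1), (0, 0, 1, -1)), ((-1, -1, 0, 0), (0, 1, -1, 0), (0, 0, 1, -1), (0, 0, 1, 1)), ((-1, -1, 0, 0), (0, 1, -1, 0), (0, 0, 1, -1), (0, 0, 1, 1))),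
  (((1, 1, 0, 0), (-1, 0, 0, 1), (0, 0, -1, -1), (0, 0, 1, -1)), ((0, 0, -1, -1), (-1, 0, 0, 1), (1, 1, 0, 0), (1, -1, 0, 0)), ((-1, -1, 0, 0), (0, 1, 0, -1), (1, -1, 0, 0), (0, 0, 1, 1)), ((0, 0, 1, -1), (-1, 0, -1, 0), (1, 1, 0, 0), (0, 0, 1, 1))),
  (((1, 1, 0, 0), (-1, 0, 0, 1), (0, 0, -1, -1), (0, 0, 1, -1)), ((0, 0, -1, -1), (0, 1, 1, 0), (-1, -1, 0, 0), (1, -1, 0, 0)), ((-1, -1, 0, 0), (0, 1, -1, 0), (1, -1, 0, 0), (0, 0, 1, 1)), ((0, 0, 1, -1), (0, 1, -1, 0), (-1, -1, 0, 0), (0, 0, 1, 1))),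
  (((1, 1, 0, 0), (-1, 0, 0, 1), (0, 0, -1, -1), (0, 0, 1, -1)), ((0, 0, -1, 1), (-1, 0, 0, -1), (1, -1, 0, 0), (1, 1, 0, 0)), ((-1, -1, 0, 0), (0, 1, 0, 1), (1, -1, 0, 0), (0, 0, 1, -1)), ((0, 0, 1, -1), (-1, 0, -1, 0), (0, 0, 1, 1), (1, 1, 0, 0))),
  (((1, 1, 0, 0), (-1, 0, 0, 1), (0, 0, -1, -1), (0, 0, 1, -1)), ((0, 0, -1, 1), (0, 1, 1, 0), (1, -1, 0, 0), (-1, -1, 0, 0)), ((-1, -1, 0, 0), (0, 1, -1, 0), (1, -1, 0, 0), (0, 0, 1, -1)), ((0, 0, 1, -1), (0, 1, -1, 0), (0, 0, 1, 1), (-1, -1, 0, 0))),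
  (((1, 1, 0, 0), (-1, 0, 0, 1), (0, 0, -1, -1), (0, 0, 1, -1)), ((0, 0, 1, -1), (0, -1, -1, 0), (-1, 1, 0, 0), (1, 1, 0, 0)), ((-1, -1, 0, 0), (0, 1, 0, 1), (0, 0, 1, -1), (1, -1, 0, 0)), ((0, 0, 1, 1), (-1, 0, -1, 0), (0, 0, 1, -1), (1, 1, 0, 0))),
  (((1, 1, 0, 0), (-1, 0, 0, 1), (0, 0, -1, -1), (0, 0, 1, -1)), ((0, 0, 1, -1), (1, 0, 0, 1), (-1, 1, 0, 0), (-1, -1, 0, 0)), ((-1, -1, 0, 0), (0, 1, -1, 0), (0, 0, 1, -1), (1, -1, 0, 0)), ((0, 0, 1, 1), (0, 1, -1, 0), (0, 0, 1, -1), (-1, -1, 0, 0))),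
  (((1, 1, 0, 0), (-1, 0, 0, 1), (0, 0, -1, -1), (0, 0, 1, -1)), ((0, 0, 1, 1), (0, -1, -1, 0), (1, 1, 0, 0), (-1, 1, 0, 0)), ((-1, -1, 0, 0), (0, 1, 0, -1), (0, 0, 1, 1), (1, -1, 0, 0)), ((0, 0, 1, 1), (-1, 0, -1, 0), (1, 1, 0, 0), (0, 0, 1, -1))),
  (((1, 1, 0, 0), (-1, 0, 0, 1), (0, 0, -1, -1), (0, 0, 1, -1)), ((0, 0, 1, 1), (1, 0, 0, -1), (-1, -1, 0, 0), (-1, 1, 0, 0)), ((-1, -1, 0, 0), (0, 1, -1, 0), (0, 0, 1, 1), (1, -1, 0, 0)), ((0, 0, 1, 1), (0, 1, -1, 0), (-1, -1, 0, 0), (0, 0, 1, -1))),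
  (((1, 1, 0, 0), (-1, 0, 0, 1), (0, 0, -1, -1), (0, 0, 1, -1)), ((1, 1, 0, 0), (-1, 0, 0, -1), (0, 0, 1, 1), (0, 0, -1, 1)), ((-1, -1, 0, 0), (1, 0, -1, 0), (0, 0, 1, 1), (0, 0, 1, -1)), ((1, 1, 0, 0), (-1, 0, -1, 0), (0, 0, 1, 1), (0, 0, 1, -1))),
  (((1, 1, 0, 0), (-1, 0, 0, 1), (0, 0, -1, -1), (0, 0, 1, -1)), ((1, 1, 0, 0), (-1, 0, 0, 1), (0, 0, -1, -1), (0, 0, 1, -1)), ((-1, -1, 0, 0), (1, 0, -1, 0), (0, 0, 1, -1), (0, 0, 1, 1)), ((1, 1, 0, 0), (-1, 0, -1, 0), (0, 0, 1, -1), (0, 0, 1, 1)))]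

def pairTable : List (Cfg × Cfg × Cfg × Cfg) := pt0++pt1++pt2++pt3++pt4++pt5++pt6++pt7++pt8++pt9++pt10++pt11

abbrev CheckPair (s1 s2 w w' : Cfg) : Prop :=
  (∀ i j : Fin 4, dotT (nth w i) (nth w j) = dotT (nth bT i) (nth bT j)) ∧
  (∀ i : Fin 4, 2 ∣ sumT (nth w i)) ∧ (∀ i : Fin 4, 2 ∣ sumT (nth w' i)) ∧
  (∀ i : Fin 4, linT (cfT (nth w i)) w' = nth bT i) ∧
  (∀ i : Fin 4, linT (cfT (nth w' i)) w = nth bT i) ∧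
  (∀ i : Fin 4, linT (cfT (nth s1 i)) w = linT (cfT (nth w i)) s2)


set_option maxRecDepth 100000 in
theorem completeS : ∀ t0 ∈ rootsL,
    ∀ t1 ∈ rootsL.filter (fun t => dotT t0 t = -1),
    ∀ t2 ∈ rootsL.filter (fun t => dotT t0 t = 0 ∧ dotT t1 t = -1),
    ∀ t3 ∈ rootsL.filter (fun t => dotT t0 t = 0 ∧ dotT t1 t = -1 ∧ dotT t2 t = 0 ∧
      rho2T (t0, t1, t2, t)),
    (t0, t1, t2, t3) ∈ SL := by decide

set_option maxRecDepth 100000 in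
theorem pairComplete : ∀ p1 ∈ SL, ∀ p2 ∈ SL, ∃ e ∈ pairTable,
    e.1 = p1 ∧ e.2.1 = p2 ∧ CheckPair p1 p2 e.2.2.1 e.2.2.2 := by decide


-- ## Bridging tuples and vectors

def tv (t : T4) : Fin 4 → ℤ := ![t.1, t.2.1, t.2.2.1, t.2.2.2]
def tt (x : Fin 4 → ℤ) : T4 := (x 0, x 1, x 2, x 3)

@[simp] lemma tt_tv (t : T4) : tt (tv t) = t := by
  simp [tt, tv]

@[simp] lemma tv_tt (x : Fin 4 → ℤ) : tv (tt x) = x := by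
  funext j; fin_cases j <;> simp [tt, tv]

lemma dot_tt (x y : Fin 4 → ℤ) : x ⬝ᵥ y = dotT (tt x) (tt y) := by
  simp [dotProduct, Fin.sum_univ_four, dotT, tt]

def bvec (i : Fin 4) : Fin 4 → ℤ := tv (nth bT i)

def cfun (x : Fin 4 → ℤ) : Fin 4 → ℤ := tv (cfT (tt x))

lemma lin_eq (c : T4) (W : Cfg) :
    tv (linT c W) = ∑ j, tv c j • tv (nth W j) := by
  funext j; fin_cases j <;>
    (simp [Fin.sum_univ_four, linT, nth, tv, addT, smT]; ring)

lemma mem_D4_tt (x : Fin 4 → ℤ) : x ∈ D4 ↔ 2 ∣ sumT (tt x) := by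
  rw [mem_D4_iff]; rfl

lemma bvec_mem (i : Fin 4) : bvec i ∈ D4 := by
  fin_cases i <;> (rw [mem_D4_iff]; decide)

def bd (i : Fin 4) : D4 := ⟨bvec i, bvec_mem i⟩

lemma expand_vec (x : Fin 4 → ℤ) (hx : x ∈ D4) :
    x = ∑ i, cfun x i • bvec i := by
  obtain ⟨k, hk⟩ := (mem_D4_iff x).1 hx
  funext j
  fin_cases j <;>
    simp [Fin.sum_univ_four, cfun, bvec, bT, nth, tv, cfT, sumT, tt] <;> omega

-- ## The basis of D4

def Bmap : (Fin 4 → ℤ) →ₗ[ℤ] D4 where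
  toFun c := ∑ i, c i • bd i
  map_add' a b := by
    simp [add_smul, Finset.sum_add_distrib]
  map_smul' m a := by
    simp [smul_smul, Finset.smul_sum]

lemma Bmap_coe (c : Fin 4 → ℤ) : ((Bmap c : D4) : Fin 4 → ℤ) = ∑ i, c i • bvec i := by
  show ((∑ i, c i • bd i : D4) : Fin 4 → ℤ) = _
  simp [Fin.sum_univ_four, bd]

lemma Bmap_bijective : Function.Bijective Bmap := by
  constructor
  · rw [injective_iff_map_eq_zero]
    intro c h
    have hv : ∑ i, c i • bvec i = 0 := by
      rw [← Bmap_coe]; rw [h]; rfl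
    have h0 := congrFun hv 0
    have h1 := congrFun hv 1
    have h2 := congrFun hv 2
    have h3 := congrFun hv 3
    simp [Fin.sum_univ_four, bvec, bT, nth, tv] at h0 h1 h2 h3
    funext j; fin_cases j <;> simp <;> omega
  · intro x
    refine ⟨cfun (x : Fin 4 → ℤ), Subtype.ext ?_⟩
    rw [Bmap_coe]
    exact (expand_vec _ x.2).symm

noncomputable def eD4 : D4 ≃ₗ[ℤ] (Fin 4 → ℤ) :=
  (LinearEquiv.ofBijective Bmap Bmap_bijective).symm

noncomputable def basisD4 : Module.Basis (Fin 4) ℤ D4 := Module.Basis.ofEquivFun eD4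

lemma basisD4_apply (i : Fin 4) : basisD4 i = bd i := by
  have : basisD4 i = eD4.symm (Pi.single i 1) := by
    simp [basisD4, Module.Basis.ofEquivFun]
  rw [this]
  show Bmap (Pi.single i 1) = bd i
  apply Subtype.ext
  rw [Bmap_coe]
  funext j
  fin_cases i <;> fin_cases j <;>
    simp [Fin.sum_univ_four, Pi.single, Function.update, bvec, bd, bT, nth, tv]

lemma expandD4 (x : D4) : x = ∑ i, cfun (x : Fin 4 → ℤ) i • bd i := by
  apply Subtype.ext
  have := Bmap_coe (cfun (x : Fin 4 → ℤ))
  show _ = ((Bmap (cfun (x : Fin 4 → ℤ)) : D4) : Fin 4 → ℤ)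
  rw [Bmap_coe]
  exact expand_vec _ x.2

lemma apply_formula (f : D4 →ₗ[ℤ] D4) (x : D4) :
    f x = ∑ i, cfun (x : Fin 4 → ℤ) i • f (bd i) := by
  conv_lhs => rw [expandD4 x]
  rw [map_sum]
  simp

-- ## Sums and coercions

lemma sum_coe (c : Fin 4 → ℤ) (v : Fin 4 → D4) :
    ((∑ j, c j • v j : D4) : Fin 4 → ℤ) = ∑ j, c j • (v j : Fin 4 → ℤ) := by
  simp [Fin.sum_univ_four]

lemma nth_quad (v : Fin 4 → T4) (j : Fin 4) :
    nth (v 0, v 1, v 2, v 3) j = v j := by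
  fin_cases j <;> rfl

lemma tt_neg (x : Fin 4 → ℤ) : tt (-x) = negT (tt x) := by
  simp [tt, negT]

lemma tt_bvec (i : Fin 4) : tt (bvec i) = nth bT i := by
  unfold bvec; rw [tt_tv]

lemma sum_cfun_eq (x : Fin 4 → ℤ) (v : Fin 4 → (Fin 4 → ℤ)) :
    ∑ j, cfun x j • v j = tv (linT (cfT (tt x)) (tt (v 0), tt (v 1), tt (v 2), tt (v 3))) := by
  rw [lin_eq]
  apply Finset.sum_congr rfl
  intro j _
  have h : tv (nth (tt (v 0), tt (v 1), tt (v 2), tt (v 3)) j) = v j := by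
    fin_cases j <;> simp [nth]
  rw [h]
  rfl

-- ## Classification of square roots of -1

lemma rootT' (t : T4) (h : dotT t t = 2) : t ∈ rootsL := by
  obtain ⟨a, b, c, d⟩ := t
  simp only [dotT] at h
  have ha : -1 ≤ a ∧ a ≤ 1 := by
    constructor <;> nlinarith [mul_self_nonneg a, mul_self_nonneg b, mul_self_nonneg c,
      mul_self_nonneg d, mul_self_nonneg (a+1), mul_self_nonneg (a-1)]
  have hb : -1 ≤ b ∧ b ≤ 1 := by
    constructor <;> nlinarith [mul_self_nonneg a, mul_self_nonneg b, mul_self_nonneg c,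
      mul_self_nonneg d, mul_self_nonneg (b+1), mul_self_nonneg (b-1)]
  have hcc : -1 ≤ c ∧ c ≤ 1 := by
    constructor <;> nlinarith [mul_self_nonneg a, mul_self_nonneg b, mul_self_nonneg c,
      mul_self_nonneg d, mul_self_nonneg (c+1), mul_self_nonneg (c-1)]
  have hd : -1 ≤ d ∧ d ≤ 1 := by
    constructor <;> nlinarith [mul_self_nonneg a, mul_self_nonneg b, mul_self_nonneg c,
      mul_self_nonneg d, mul_self_nonneg (d+1), mul_self_nonneg (d-1)]
  obtain ⟨ha1, ha2⟩ := ha; obtain ⟨hb1, hb2⟩ := hb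
  obtain ⟨hc1, hc2⟩ := hcc; obtain ⟨hd1, hd2⟩ := hd
  interval_cases a <;> interval_cases b <;> interval_cases c <;> interval_cases d <;>
    revert h <;> decide

/-- The tuple of rows (images of the basis) of an endomorphism of D4. -/
def rows (ρ : D4 ≃ₗ[ℤ] D4) : Cfg :=
  (tt (ρ (bd 0) : Fin 4 → ℤ), tt (ρ (bd 1) : Fin 4 → ℤ),
   tt (ρ (bd 2) : Fin 4 → ℤ), tt (ρ (bd 3) : Fin 4 → ℤ))

lemma nth_rows (ρ : D4 ≃ₗ[ℤ] D4) (j : Fin 4) :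
    nth (rows ρ) j = tt (ρ (bd j) : Fin 4 → ℤ) := by
  fin_cases j <;> rfl

lemma tt_bd (i : Fin 4) : tt ((bd i : D4) : Fin 4 → ℤ) = nth bT i := by
  show tt (tv (nth bT i)) = nth bT i
  rw [tt_tv]

lemma rows_dot (ρ : D4 ≃ₗ[ℤ] D4) (hiso : IsD4Isometry ρ) (i j : Fin 4) :
    dotT (nth (rows ρ) i) (nth (rows ρ) j) = dotT (nth bT i) (nth bT j) := by
  rw [nth_rows, nth_rows, ← dot_tt, hiso (bd i) (bd j), dot_tt, tt_bd, tt_bd]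

lemma rows_rho2 (ρ : D4 ≃ₗ[ℤ] D4) (hsq : ∀ x : D4, ρ (ρ x) = -x) (i : Fin 4) :
    linT (cfT (nth (rows ρ) i)) (rows ρ) = negT (nth bT i) := by
  have key : ρ (ρ (bd i)) = - bd i := hsq (bd i)
  have hexp : ρ (ρ (bd i)) = ∑ j, cfun ((ρ (bd i) : D4) : Fin 4 → ℤ) j • ρ (bd j) := by
    have := apply_formula ρ.toLinearMap (ρ (bd i))
    simpa using this
  have hvec : ∑ j, cfun ((ρ (bd i) : D4) : Fin 4 → ℤ) j • ((ρ (bd j) : D4) : Fin 4 → ℤ)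
      = -(bvec i) := by
    have := congrArg (fun z : D4 => (z : Fin 4 → ℤ)) (hexp.symm.trans key)
    rw [sum_coe] at this
    rw [this]
    rfl
  rw [sum_cfun_eq] at hvec
  have h2 := congrArg tt hvec
  rw [tt_tv] at h2
  have h3 : tt (-(bvec i)) = negT (nth bT i) := by
    rw [tt_neg, tt_bvec]
  rw [nth_rows]
  exact h2.trans h3

lemma rows_root (ρ : D4 ≃ₗ[ℤ] D4) (hiso : IsD4Isometry ρ) (i : Fin 4) :
    nth (rows ρ) i ∈ rootsL := by
  apply rootT'
  rw [rows_dot ρ hiso i i]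
  fin_cases i <;> decide

lemma rows_mem_SL (ρ : D4 ≃ₗ[ℤ] D4) (hiso : IsD4Isometry ρ)
    (hsq : ∀ x : D4, ρ (ρ x) = -x) : rows ρ ∈ SL := by
  have h01 := rows_dot ρ hiso 0 1
  have h02 := rows_dot ρ hiso 0 2
  have h12 := rows_dot ρ hiso 1 2
  have h03 := rows_dot ρ hiso 0 3
  have h13 := rows_dot ρ hiso 1 3
  have h23 := rows_dot ρ hiso 2 3
  have hr0 := rows_root ρ hiso 0
  have hr1 := rows_root ρ hiso 1
  have hr2 := rows_root ρ hiso 2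
  have hr3 := rows_root ρ hiso 3
  have hrho : rho2T (rows ρ) := rows_rho2 ρ hsq
  have hquad : rows ρ = (nth (rows ρ) 0, nth (rows ρ) 1, nth (rows ρ) 2, nth (rows ρ) 3) := rfl
  rw [hquad]
  apply completeS
  · exact hr0
  · rw [List.mem_filter]
    exact ⟨hr1, by rw [decide_eq_true_iff]; rw [h01]; decide⟩
  · rw [List.mem_filter]
    refine ⟨hr2, ?_⟩
    rw [decide_eq_true_iff]
    exact ⟨by rw [h02]; decide, by rw [h12]; decide⟩
  · rw [List.mem_filter]
    refine ⟨hr3, ?_⟩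
    rw [decide_eq_true_iff]
    refine ⟨by rw [h03]; decide, by rw [h13]; decide, by rw [h23]; decide, ?_⟩
    rw [← hquad]
    exact hrho

-- ## Building an isometry from a checked table entry

lemma dot_of_basis (f : D4 →ₗ[ℤ] D4)
    (h : ∀ i j : Fin 4, ((f (bd i) : Fin 4 → ℤ) ⬝ᵥ (f (bd j) : Fin 4 → ℤ))
      = ((bd i : Fin 4 → ℤ) ⬝ᵥ (bd j : Fin 4 → ℤ))) (x y : D4) :
    ((f x : Fin 4 → ℤ) ⬝ᵥ (f y : Fin 4 → ℤ)) = ((x : Fin 4 → ℤ) ⬝ᵥ (y : Fin 4 → ℤ)) := by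
  have hgx : (f x : Fin 4 → ℤ) = ∑ i, cfun (x : Fin 4 → ℤ) i • (f (bd i) : Fin 4 → ℤ) := by
    rw [apply_formula f x, sum_coe]
  have hgy : (f y : Fin 4 → ℤ) = ∑ i, cfun (y : Fin 4 → ℤ) i • (f (bd i) : Fin 4 → ℤ) := by
    rw [apply_formula f y, sum_coe]
  have hxx : (x : Fin 4 → ℤ) = ∑ i, cfun (x : Fin 4 → ℤ) i • (bd i : Fin 4 → ℤ) := by
    conv_lhs => rw [show (x : Fin 4 → ℤ) = ((∑ i, cfun (x : Fin 4 → ℤ) i • bd i : D4) : _)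
      from congrArg _ (expandD4 x)]
    rw [sum_coe]
  have hyy : (y : Fin 4 → ℤ) = ∑ i, cfun (y : Fin 4 → ℤ) i • (bd i : Fin 4 → ℤ) := by
    conv_lhs => rw [show (y : Fin 4 → ℤ) = ((∑ i, cfun (y : Fin 4 → ℤ) i • bd i : D4) : _)
      from congrArg _ (expandD4 y)]
    rw [sum_coe]
  conv_lhs => rw [hgx, hgy]
  conv_rhs => rw [hxx, hyy]
  simp only [Fin.sum_univ_four, add_dotProduct, dotProduct_add,
    smul_dotProduct, dotProduct_smul, smul_eq_mul]
  rw [h 0 0, h 0 1, h 0 2, h 0 3, h 1 0, h 1 1, h 1 2, h 1 3,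
      h 2 0, h 2 1, h 2 2, h 2 3, h 3 0, h 3 1, h 3 2, h 3 3]

theorem stmt9' (ρ₁ ρ₂ : D4 ≃ₗ[ℤ] D4)
    (h₁iso : IsD4Isometry ρ₁) (h₂iso : IsD4Isometry ρ₂)
    (h₁ : ∀ x : D4, ρ₁ (ρ₁ x) = -x) (h₂ : ∀ x : D4, ρ₂ (ρ₂ x) = -x) :
    ∃ g : D4 ≃ₗ[ℤ] D4, IsD4Isometry g ∧ ∀ x : D4, g (ρ₁ x) = ρ₂ (g x) := by
  obtain ⟨e, hemem, he1, he2, hcp⟩ :=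
    pairComplete (rows ρ₁) (rows_mem_SL ρ₁ h₁iso h₁) (rows ρ₂) (rows_mem_SL ρ₂ h₂iso h₂)
  set w : Cfg := e.2.2.1 with hw
  set w' : Cfg := e.2.2.2 with hw'
  obtain ⟨hgram, hwmem, hw'mem, hww', hw'w, hint⟩ := hcp
  -- the images of the basis vectors
  have hwd : ∀ i, tv (nth w i) ∈ D4 := by
    intro i
    rw [mem_D4_tt, tt_tv]
    exact hwmem i
  have hw'd : ∀ i, tv (nth w' i) ∈ D4 := by
    intro i
    rw [mem_D4_tt, tt_tv]
    exact hw'mem i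
  set wd : Fin 4 → D4 := fun i => ⟨tv (nth w i), hwd i⟩ with hwddef
  set w'd : Fin 4 → D4 := fun i => ⟨tv (nth w' i), hw'd i⟩ with hw'ddef
  set gl : D4 →ₗ[ℤ] D4 := basisD4.constr ℕ wd with hgl
  set gl' : D4 →ₗ[ℤ] D4 := basisD4.constr ℕ w'd with hgl'
  have hglbd : ∀ i, gl (bd i) = wd i := by
    intro i
    rw [← basisD4_apply, hgl]
    exact basisD4.constr_basis ℕ wd i
  have hgl'bd : ∀ i, gl' (bd i) = w'd i := by
    intro i
    rw [← basisD4_apply, hgl']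
    exact basisD4.constr_basis ℕ w'd i
  -- composing gl' and gl
  have hcomp1 : ∀ i, gl' (gl (bd i)) = bd i := by
    intro i
    rw [hglbd]
    have hexp : gl' (wd i) = ∑ j, cfun ((wd i : D4) : Fin 4 → ℤ) j • gl' (bd j) :=
      apply_formula gl' (wd i)
    rw [hexp]
    apply Subtype.ext
    rw [sum_coe]
    have : ∀ j, ((gl' (bd j) : D4) : Fin 4 → ℤ) = tv (nth w' j) := by
      intro j; rw [hgl'bd]
    simp only [this]
    rw [sum_cfun_eq ((wd i : D4) : Fin 4 → ℤ) (fun j => tv (nth w' j))]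
    show tv (linT (cfT (tt (tv (nth w i)))) (tt (tv (nth w' 0)), tt (tv (nth w' 1)),
      tt (tv (nth w' 2)), tt (tv (nth w' 3)))) = _
    rw [tt_tv, tt_tv, tt_tv, tt_tv, tt_tv]
    have h4 : (nth w' 0, nth w' 1, nth w' 2, nth w' 3) = w' := rfl
    rw [h4, hww' i]
    rfl
  have hcomp2 : ∀ i, gl (gl' (bd i)) = bd i := by
    intro i
    rw [hgl'bd]
    have hexp : gl (w'd i) = ∑ j, cfun ((w'd i : D4) : Fin 4 → ℤ) j • gl (bd j) :=
      apply_formula gl (w'd i)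
    rw [hexp]
    apply Subtype.ext
    rw [sum_coe]
    have : ∀ j, ((gl (bd j) : D4) : Fin 4 → ℤ) = tv (nth w j) := by
      intro j; rw [hglbd]
    simp only [this]
    rw [sum_cfun_eq ((w'd i : D4) : Fin 4 → ℤ) (fun j => tv (nth w j))]
    show tv (linT (cfT (tt (tv (nth w' i)))) (tt (tv (nth w 0)), tt (tv (nth w 1)),
      tt (tv (nth w 2)), tt (tv (nth w 3)))) = _
    rw [tt_tv, tt_tv, tt_tv, tt_tv, tt_tv]
    have h4 : (nth w 0, nth w 1, nth w 2, nth w 3) = w := rfl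
    rw [h4, hw'w i]
    rfl
  have hc1 : gl.comp gl' = LinearMap.id := by
    apply basisD4.ext
    intro i
    rw [basisD4_apply]
    simpa using hcomp2 i
  have hc2 : gl'.comp gl = LinearMap.id := by
    apply basisD4.ext
    intro i
    rw [basisD4_apply]
    simpa using hcomp1 i
  refine ⟨LinearEquiv.ofLinear gl gl' hc1 hc2, ?_, ?_⟩
  · -- isometry
    intro x y
    show ((gl x : Fin 4 → ℤ) ⬝ᵥ (gl y : Fin 4 → ℤ)) = _
    apply dot_of_basis
    intro i j
    have hi : ((gl (bd i) : D4) : Fin 4 → ℤ) = tv (nth w i) := by rw [hglbd]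
    have hj : ((gl (bd j) : D4) : Fin 4 → ℤ) = tv (nth w j) := by rw [hglbd]
    rw [hi, hj, dot_tt, tt_tv, tt_tv, hgram i j, dot_tt, tt_bd, tt_bd]
  · -- intertwining
    intro x
    show gl (ρ₁ x) = ρ₂ (gl x)
    have hmaps : (gl.comp ρ₁.toLinearMap) = (ρ₂.toLinearMap.comp gl) := by
      apply basisD4.ext
      intro i
      rw [basisD4_apply]
      show gl (ρ₁ (bd i)) = ρ₂ (gl (bd i))
      have hL : gl (ρ₁ (bd i)) = ∑ j, cfun ((ρ₁ (bd i) : D4) : Fin 4 → ℤ) j • gl (bd j) := by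
        conv_lhs => rw [expandD4 (ρ₁ (bd i))]
        simp only [map_sum, _root_.map_smul]
      have hR : ρ₂ (gl (bd i)) = ∑ j, cfun ((gl (bd i) : D4) : Fin 4 → ℤ) j • ρ₂ (bd j) := by
        have := apply_formula ρ₂.toLinearMap (gl (bd i))
        simpa using this
      rw [hL, hR]
      apply Subtype.ext
      rw [sum_coe, sum_coe]
      have hglw : ∀ j, ((gl (bd j) : D4) : Fin 4 → ℤ) = tv (nth w j) := by
        intro j; rw [hglbd]
      simp only [hglw]
      rw [sum_cfun_eq ((ρ₁ (bd i) : D4) : Fin 4 → ℤ) (fun j => tv (nth w j))]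
      rw [sum_cfun_eq (tv (nth w i)) (fun j => ((ρ₂ (bd j) : D4) : Fin 4 → ℤ))]
      have e1 : (tt (tv (nth w 0)), tt (tv (nth w 1)), tt (tv (nth w 2)), tt (tv (nth w 3))) = w := by
        rw [tt_tv, tt_tv, tt_tv, tt_tv]
        rfl
      have e2 : (tt ((ρ₂ (bd 0) : D4) : Fin 4 → ℤ), tt ((ρ₂ (bd 1) : D4) : Fin 4 → ℤ),
          tt ((ρ₂ (bd 2) : D4) : Fin 4 → ℤ), tt ((ρ₂ (bd 3) : D4) : Fin 4 → ℤ)) = rows ρ₂ := rfl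
      rw [e1, e2, tt_tv]
      
      have e3 : tt ((ρ₁ (bd i) : D4) : Fin 4 → ℤ) = nth (rows ρ₁) i := (nth_rows ρ₁ i).symm
      rw [e3, hint i]
    exact LinearMap.congr_fun hmaps x

/-- Let `ρ₁` and `ρ₂` be isometries of the lattice `D₄` with
`ρ₁ ∘ ρ₁ = -id` and `ρ₂ ∘ ρ₂ = -id`. Then there is an isometry `g` of `D₄` with
`g ∘ ρ₁ = ρ₂ ∘ g`. In particular, `D₄` has a unique structure of `ℤ[i]`-module up to
isometries. -/
theorem stmt9 (ρ₁ ρ₂ : D4 ≃ₗ[ℤ] D4)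
    (h₁iso : IsD4Isometry ρ₁) (h₂iso : IsD4Isometry ρ₂)
    (h₁ : ∀ x : D4, ρ₁ (ρ₁ x) = -x) (h₂ : ∀ x : D4, ρ₂ (ρ₂ x) = -x) :
    ∃ g : D4 ≃ₗ[ℤ] D4, IsD4Isometry g ∧ ∀ x : D4, g (ρ₁ x) = ρ₂ (g x) := by
  exact stmt9' ρ₁ ρ₂ h₁iso h₂iso h₁ h₂
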